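/- arXiv:2410.19152 — 7 statements merged into one kernel-verified Lean document; each statement's English description precedes it below -/
import Mathlib

section
/- Let ρ be a separable density matrix on ℂ^m ⊗ ℂ^n. Then for any indices w, y ∈ [m] and x, z ∈ [n], the entry of ρ satisfies |⟨w,x|ρ|y,z⟩| ≤ √(min(⟨w,x|ρ|w,x⟩, ⟨w,z|ρ|w,z⟩, ⟨y,x|ρ|y,x⟩, ⟨y,z|ρ|y,z⟩)), and moreover |⟨w,x|ρ|y,z⟩| ≤ (1/2)·min(⟨w,x|ρ|w,x⟩ + ⟨y,z|ρ|y,z⟩, ⟨w,z|ρ|w,z⟩ + ⟨y,x|ρ|y,x⟩). -/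
open scoped BigOperators ComplexOrder Kronecker
open Matrix


lemma psd_diag_im_zero {n : Type*} [Fintype n] {A : Matrix n n ℂ}
    (hA : A.PosSemidef) (a : n) : (A a a).im = 0 := by
  have := congrArg Complex.im (hA.isHermitian.apply a a)
  simp [Complex.conj_im] at this
  linarith

lemma psd_diag_re_nonneg {n : Type*} [Fintype n] [DecidableEq n] {A : Matrix n n ℂ}
    (hA : A.PosSemidef) (a : n) : 0 ≤ (A a a).re := by
  have h := hA.dotProduct_mulVec_nonneg (Pi.single a 1)
  have h2 : dotProduct (star (Pi.single a 1)) (A *ᵥ Pi.single a 1) = A a a := by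
    simp [Matrix.mulVec_single, dotProduct, Pi.single_apply]
  rw [h2] at h
  exact (Complex.le_def.mp h).1

open scoped MatrixOrder in
lemma psd_abs_le {n : Type*} [Fintype n] [DecidableEq n] {A : Matrix n n ℂ}
    (hA : A.PosSemidef) (a b : n) :
    ‖A a b‖ ≤ Real.sqrt ((A a a).re * (A b b).re) := by
  classical
  set S := CFC.sqrt A with hSdef
  have hSS : S * S = A := CFC.sqrt_mul_sqrt_self A hA.nonneg
  have hSH : S.IsHermitian := (CFC.sqrt_nonneg A).posSemidef.isHermitian
  set u : EuclideanSpace ℂ n := WithLp.toLp 2 (fun j => S j a) with hu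
  set v : EuclideanSpace ℂ n := WithLp.toLp 2 (fun j => S j b) with hv
  have key : ∀ c d : n, A c d = ∑ j, (starRingEnd ℂ) (S j c) * S j d := by
    intro c d
    rw [← hSS, Matrix.mul_apply]
    congr 1; ext j
    rw [← hSH.apply c j]
    simp [Complex.star_def, mul_comm]
  have h1 : ‖A a b‖ = ‖(inner ℂ u v : ℂ)‖ := by
    rw [key a b]
    simp only [PiLp.inner_apply, RCLike.inner_apply]
    simp only [mul_comm]
    rfl
  have h2 : (A a a).re = ‖u‖ ^ 2 := by
    rw [← inner_self_eq_norm_sq (𝕜 := ℂ), key a a]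
    simp only [PiLp.inner_apply, RCLike.inner_apply]
    simp only [mul_comm]
    rfl
  have h3 : (A b b).re = ‖v‖ ^ 2 := by
    rw [← inner_self_eq_norm_sq (𝕜 := ℂ), key b b]
    simp only [PiLp.inner_apply, RCLike.inner_apply]
    simp only [mul_comm]
    rfl
  rw [h1, h2, h3, Real.sqrt_mul (by positivity), Real.sqrt_sq (norm_nonneg _),
    Real.sqrt_sq (norm_nonneg _)]
  exact norm_inner_le_norm u v


/-- A density matrix on `ℂ^m ⊗ ℂ^n` is separable if it is a finite convex combination of
Kronecker products of density matrices. -/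
def MatIsSeparable {m n : Type*} [Fintype m] [Fintype n]
    (ρ : Matrix (m × n) (m × n) ℂ) : Prop :=
  ∃ (k : ℕ) (p : Fin k → ℝ) (M : Fin k → Matrix m m ℂ) (N : Fin k → Matrix n n ℂ),
    (∀ i, 0 ≤ p i) ∧ (∑ i, p i = 1) ∧
    (∀ i, (M i).PosSemidef ∧ (M i).trace = 1) ∧
    (∀ i, (N i).PosSemidef ∧ (N i).trace = 1) ∧
    ρ = ∑ i, (p i : ℂ) • (M i ⊗ₖ N i)

/-- off-diagonal entries of a separable density matrix are controlled by its
diagonal entries. -/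
theorem separable_offdiagonal_bounds
    (m n : ℕ)
    (ρ : Matrix (Fin m × Fin n) (Fin m × Fin n) ℂ)
    (hpsd : ρ.PosSemidef) (htr : ρ.trace = 1)
    (hsep : MatIsSeparable ρ)
    (w y : Fin m) (x z : Fin n) :
    ‖ρ (w, x) (y, z)‖
      ≤ Real.sqrt (min (min (ρ (w, x) (w, x)).re ((ρ (w, z) (w, z)).re))
          (min ((ρ (y, x) (y, x)).re) ((ρ (y, z) (y, z)).re))) ∧
    ‖ρ (w, x) (y, z)‖
      ≤ (1 / 2) * min ((ρ (w, x) (w, x)).re + (ρ (y, z) (y, z)).re)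
          ((ρ (w, z) (w, z)).re + (ρ (y, x) (y, x)).re) := by
  classical
  obtain ⟨k, p, M, N, hp, hpsum, hM, hN, hρ⟩ := hsep
  -- entry formula
  have hentry : ∀ (a c : Fin m) (b d : Fin n),
      ρ (a, b) (c, d) = ∑ i, (p i : ℂ) * (M i a c * N i b d) := by
    intro a c b d
    rw [hρ]
    simp [Matrix.sum_apply, Matrix.kroneckerMap_apply, smul_eq_mul]
  -- abbreviations
  set α : Fin k → ℝ := fun i => Real.sqrt ((M i w w).re) with hα
  set β : Fin k → ℝ := fun i => Real.sqrt ((M i y y).re) with hβ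
  set γ : Fin k → ℝ := fun i => Real.sqrt ((N i x x).re) with hγ
  set δ : Fin k → ℝ := fun i => Real.sqrt ((N i z z).re) with hδ
  have hMnn : ∀ i, 0 ≤ (M i w w).re := fun i => psd_diag_re_nonneg (hM i).1 w
  have hMnn' : ∀ i, 0 ≤ (M i y y).re := fun i => psd_diag_re_nonneg (hM i).1 y
  have hNnn : ∀ i, 0 ≤ (N i x x).re := fun i => psd_diag_re_nonneg (hN i).1 x
  have hNnn' : ∀ i, 0 ≤ (N i z z).re := fun i => psd_diag_re_nonneg (hN i).1 z
  have hα2 : ∀ i, α i ^ 2 = (M i w w).re := fun i => Real.sq_sqrt (hMnn i)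
  have hβ2 : ∀ i, β i ^ 2 = (M i y y).re := fun i => Real.sq_sqrt (hMnn' i)
  have hγ2 : ∀ i, γ i ^ 2 = (N i x x).re := fun i => Real.sq_sqrt (hNnn i)
  have hδ2 : ∀ i, δ i ^ 2 = (N i z z).re := fun i => Real.sq_sqrt (hNnn' i)
  -- diagonal entries of ρ
  have hdiag : ∀ (a : Fin m) (b : Fin n),
      (ρ (a, b) (a, b)).re = ∑ i, p i * ((M i a a).re * (N i b b).re) := by
    intro a b
    rw [hentry a a b b, Complex.re_sum]
    refine Finset.sum_congr rfl fun i _ => ?_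
    have h1 : (M i a a).im = 0 := psd_diag_im_zero (hM i).1 a
    have h2 : (N i b b).im = 0 := psd_diag_im_zero (hN i).1 b
    simp [Complex.mul_re, Complex.mul_im, h1, h2]
  -- the main estimate on the sum
  have hbound : ‖ρ (w, x) (y, z)‖
      ≤ ∑ i, p i * (α i * γ i) * (β i * δ i) := by
    rw [hentry w y x z]
    refine (norm_sum_le _ _).trans (Finset.sum_le_sum fun i _ => ?_)
    rw [norm_mul, norm_mul, Complex.norm_real, Real.norm_eq_abs, abs_of_nonneg (hp i)]
    have h1 : ‖M i w y‖ ≤ α i * β i := by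
      rw [hα, hβ]
      simpa [Real.sqrt_mul (hMnn i)] using psd_abs_le (hM i).1 w y
    have h2 : ‖N i x z‖ ≤ γ i * δ i := by
      rw [hγ, hδ]
      simpa [Real.sqrt_mul (hNnn i)] using psd_abs_le (hN i).1 x z
    have := mul_le_mul h1 h2 (norm_nonneg _)
      (mul_nonneg (Real.sqrt_nonneg _) (Real.sqrt_nonneg _))
    calc p i * (‖M i w y‖ * ‖N i x z‖)
        ≤ p i * ((α i * β i) * (γ i * δ i)) := by
          exact mul_le_mul_of_nonneg_left this (hp i)
      _ = p i * (α i * γ i) * (β i * δ i) := by ring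
  -- diagonal values
  set d1 := (ρ (w, x) (w, x)).re with hd1
  set d2 := (ρ (w, z) (w, z)).re with hd2
  set d3 := (ρ (y, x) (y, x)).re with hd3
  set d4 := (ρ (y, z) (y, z)).re with hd4
  have hd1e : d1 = ∑ i, p i * ((α i * γ i)) ^ 2 := by
    rw [hd1, hdiag w x]
    refine Finset.sum_congr rfl fun i _ => ?_
    rw [mul_pow, hα2, hγ2]
  have hd2e : d2 = ∑ i, p i * ((α i * δ i)) ^ 2 := by
    rw [hd2, hdiag w z]
    refine Finset.sum_congr rfl fun i _ => ?_
    rw [mul_pow, hα2, hδ2]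
  have hd3e : d3 = ∑ i, p i * ((β i * γ i)) ^ 2 := by
    rw [hd3, hdiag y x]
    refine Finset.sum_congr rfl fun i _ => ?_
    rw [mul_pow, hβ2, hγ2]
  have hd4e : d4 = ∑ i, p i * ((β i * δ i)) ^ 2 := by
    rw [hd4, hdiag y z]
    refine Finset.sum_congr rfl fun i _ => ?_
    rw [mul_pow, hβ2, hδ2]
  -- Cauchy-Schwarz for both pairings
  have hCS : ∀ (f g : Fin k → ℝ),
      ∑ i, p i * f i * g i ≤ Real.sqrt (∑ i, p i * f i ^ 2) * Real.sqrt (∑ i, p i * g i ^ 2) := by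
    intro f g
    have := Real.sum_mul_le_sqrt_mul_sqrt Finset.univ
      (fun i => Real.sqrt (p i) * f i) (fun i => Real.sqrt (p i) * g i)
    calc ∑ i, p i * f i * g i
        = ∑ i, (Real.sqrt (p i) * f i) * (Real.sqrt (p i) * g i) := by
          refine Finset.sum_congr rfl fun i _ => ?_
          rw [mul_mul_mul_comm, Real.mul_self_sqrt (hp i)]; ring
      _ ≤ _ := this.trans_eq (by
          congr 1 <;> congr 1 <;>
          exact Finset.sum_congr rfl fun i _ => by
            rw [mul_pow, Real.sq_sqrt (hp i)])
  have hsum_eq : ∑ i, p i * (α i * γ i) * (β i * δ i)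
      = ∑ i, p i * (α i * δ i) * (β i * γ i) := by
    refine Finset.sum_congr rfl fun i _ => by ring
  have hCS14 : ‖ρ (w, x) (y, z)‖ ≤ Real.sqrt d1 * Real.sqrt d4 := by
    refine hbound.trans ?_
    rw [hd1e, hd4e]
    exact hCS (fun i => α i * γ i) (fun i => β i * δ i)
  have hCS23 : ‖ρ (w, x) (y, z)‖ ≤ Real.sqrt d2 * Real.sqrt d3 := by
    refine hbound.trans ?_
    rw [hsum_eq, hd2e, hd3e]
    exact hCS (fun i => α i * δ i) (fun i => β i * γ i)
  -- diagonal entries are in [0,1]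
  have hdnn : ∀ a : Fin m × Fin n, 0 ≤ (ρ a a).re := fun a => psd_diag_re_nonneg hpsd a
  have hdle1 : ∀ a : Fin m × Fin n, (ρ a a).re ≤ 1 := by
    intro a
    have h1 : ∑ b : Fin m × Fin n, (ρ b b).re = 1 := by
      have := congrArg Complex.re htr
      simpa [Matrix.trace, Matrix.diag, Complex.re_sum] using this
    rw [← h1]
    exact Finset.single_le_sum (fun b _ => hdnn b) (Finset.mem_univ a)
  -- |entry| ≤ √ dj for each j
  have hb : ∀ (u v : ℝ), 0 ≤ u → u ≤ 1 → 0 ≤ v → v ≤ 1 →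
      Real.sqrt u * Real.sqrt v ≤ min (Real.sqrt u) (Real.sqrt v) := by
    intro u v hu hu1 hv hv1
    refine le_min ?_ ?_
    · calc Real.sqrt u * Real.sqrt v ≤ Real.sqrt u * 1 := by
            exact mul_le_mul_of_nonneg_left (Real.sqrt_le_one.mpr hv1) (Real.sqrt_nonneg _)
        _ = Real.sqrt u := mul_one _
    · calc Real.sqrt u * Real.sqrt v ≤ 1 * Real.sqrt v := by
            exact mul_le_mul_of_nonneg_right (Real.sqrt_le_one.mpr hu1) (Real.sqrt_nonneg _)
        _ = Real.sqrt v := one_mul _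
  have hb1 : ‖ρ (w, x) (y, z)‖ ≤ Real.sqrt d1 :=
    hCS14.trans ((hb d1 d4 (hdnn _) (hdle1 _) (hdnn _) (hdle1 _)).trans (min_le_left _ _))
  have hb4 : ‖ρ (w, x) (y, z)‖ ≤ Real.sqrt d4 :=
    hCS14.trans ((hb d1 d4 (hdnn _) (hdle1 _) (hdnn _) (hdle1 _)).trans (min_le_right _ _))
  have hb2 : ‖ρ (w, x) (y, z)‖ ≤ Real.sqrt d2 :=
    hCS23.trans ((hb d2 d3 (hdnn _) (hdle1 _) (hdnn _) (hdle1 _)).trans (min_le_left _ _))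
  have hb3 : ‖ρ (w, x) (y, z)‖ ≤ Real.sqrt d3 :=
    hCS23.trans ((hb d2 d3 (hdnn _) (hdle1 _) (hdnn _) (hdle1 _)).trans (min_le_right _ _))
  constructor
  · rcases min_cases (min d1 d2) (min d3 d4) with ⟨h, _⟩ | ⟨h, _⟩ <;> rw [h]
    · rcases min_cases d1 d2 with ⟨h', _⟩ | ⟨h', _⟩ <;> rw [h']
      · exact hb1
      · exact hb2
    · rcases min_cases d3 d4 with ⟨h', _⟩ | ⟨h', _⟩ <;> rw [h']
      · exact hb3
      · exact hb4
  · -- AM-GM bounds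
    have hAM : ∀ (f g : Fin k → ℝ),
        ∑ i, p i * f i * g i ≤ (1 / 2) * ((∑ i, p i * f i ^ 2) + (∑ i, p i * g i ^ 2)) := by
      intro f g
      rw [← Finset.sum_add_distrib, Finset.mul_sum]
      refine Finset.sum_le_sum fun i _ => ?_
      nlinarith [sq_nonneg (f i - g i), hp i, sq_nonneg (f i + g i)]
    rw [mul_min_of_nonneg _ _ (by norm_num : (0:ℝ) ≤ 1/2)]
    refine le_min ?_ ?_
    · refine hbound.trans ?_
      rw [hd1e, hd4e]
      exact hAM (fun i => α i * γ i) (fun i => β i * δ i)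
    · refine hbound.trans ?_
      rw [hsum_eq, hd2e, hd3e]
      exact hAM (fun i => α i * δ i) (fun i => β i * γ i)
end

section
/- Let β, δ ∈ ℂ^N be unit vectors (Σ_j |β_j|² = Σ_j |δ_j|² = 1), and let t = max_{j∈[N]} |β_j|·|δ_j|. Then Σ_{j∈[N]} |β_j|²·|δ_j|² ≤ 1 − 2t(1 − t). (This is the probability that measuring both states in the computational basis yields the same outcome.) -/
open scoped BigOperators

/-- for unit vectors `β, δ ∈ ℂ^N` with `t = max_j |β_j|·|δ_j|`, the collision
probability satisfies `Σ_j |β_j|²·|δ_j|² ≤ 1 − 2t(1 − t)`. -/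
theorem collision_probability_bound
    (N : ℕ) (β δ : Fin N → ℂ)
    (hβ : ∑ j, ‖β j‖ ^ 2 = 1)
    (hδ : ∑ j, ‖δ j‖ ^ 2 = 1)
    (t : ℝ)
    (ht : IsGreatest (Set.range fun j => ‖β j‖ * ‖δ j‖) t) :
    ∑ j, ‖β j‖ ^ 2 * ‖δ j‖ ^ 2 ≤ 1 - 2 * t * (1 - t) := by
  set a : Fin N → ℝ := fun j => ‖β j‖ * ‖δ j‖ with ha
  obtain ⟨⟨j0, hj0⟩, hub⟩ := ht
  have ha_nonneg : ∀ j, 0 ≤ a j := fun j => mul_nonneg (norm_nonneg _) (norm_nonneg _)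
  have hle : ∀ j, a j ≤ t := fun j => hub ⟨j, rfl⟩
  -- Cauchy–Schwarz: ∑ a ≤ 1
  have hCS : (∑ j, a j) ^ 2 ≤ 1 := by
    have := Finset.sum_mul_sq_le_sq_mul_sq Finset.univ (fun j => ‖β j‖)
      (fun j => ‖δ j‖)
    simpa [hβ, hδ] using this
  have hsum_le : ∑ j, a j ≤ 1 := by
    nlinarith [Finset.sum_nonneg (fun j (_ : j ∈ Finset.univ) => ha_nonneg j)]
  have hteq : a j0 = t := hj0
  have ht0 : 0 ≤ t := hteq ▸ ha_nonneg j0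
  have key : ∑ j, a j ^ 2 ≤ t ^ 2 + (1 - t) ^ 2 := by
    rw [← Finset.sum_erase_add _ _ (Finset.mem_univ j0)]
    have h1 : ∑ j ∈ Finset.univ.erase j0, a j ^ 2 ≤ (∑ j ∈ Finset.univ.erase j0, a j) ^ 2 :=
      Finset.sum_sq_le_sq_sum_of_nonneg (fun i _ => ha_nonneg i)
    have h2 : ∑ j ∈ Finset.univ.erase j0, a j ≤ 1 - t := by
      have := Finset.sum_erase_add Finset.univ a (Finset.mem_univ j0)
      rw [hteq] at this
      linarith [hsum_le, this.ge, this.le]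
    have h3 : (0:ℝ) ≤ ∑ j ∈ Finset.univ.erase j0, a j :=
      Finset.sum_nonneg (fun i _ => ha_nonneg i)
    have h4 : (∑ j ∈ Finset.univ.erase j0, a j) ^ 2 ≤ (1 - t) ^ 2 := by nlinarith
    nlinarith [sq_nonneg (a j0), hteq]
  calc ∑ j, ‖β j‖ ^ 2 * ‖δ j‖ ^ 2 = ∑ j, a j ^ 2 := by
        simp [ha, mul_pow]
    _ ≤ t ^ 2 + (1 - t) ^ 2 := key
    _ = 1 - 2 * t * (1 - t) := by ring
end

section
/- Fix integers R ≥ 1 and κ ≥ 2, and let a be the amplitude function of a unit vector ψ in ℂ^R ⊗ (ℂ^κ ⊗ ℂ^R) ⊗ ℂ^κ as in the tripartite setup. Suppose the MatchCheck success probability of ψ satisfies Σ_{v,c} |a_{vc,vc}|² ≥ 1 − ε, and suppose the reduced density matrix ρ_{BC} is separable (as a state on ℂ^{κR} ⊗ ℂ^κ). Then there exists a function σ : [R] → [κ] such that Σ_{v∈[R]} |a_{v σ(v), v σ(v)}|² ≥ 1 − (κ + 1)ε. -/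
open scoped BigOperators ComplexOrder Kronecker
open Matrix

/-- The reduced density matrix on registers `B = ℂ^κ ⊗ ℂ^R` and `C = ℂ^κ`, obtained by
tracing out register `A` from the tripartite pure state with amplitudes `a`:
`⟨c,v,d| ρ_BC |e,w,f⟩ = Σ_x a_{xc,vd} · conj(a_{xe,wf})`. -/
noncomputable def rhoBC {R κ : ℕ} (a : (Fin R × Fin κ) × (Fin R × Fin κ) → ℂ) :
    Matrix ((Fin κ × Fin R) × Fin κ) ((Fin κ × Fin R) × Fin κ) ℂ :=
  Matrix.of fun p q =>
    ∑ x : Fin R, a ((x, p.1.1), (p.1.2, p.2)) * (starRingEnd ℂ) (a ((x, q.1.1), (q.1.2, q.2)))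

/-! ### Auxiliary lemmas -/

lemma aux_star_pi_single {n : Type*} [DecidableEq n] (i : n) (a : ℂ) :
    star (Pi.single i a : n → ℂ) = Pi.single i (starRingEnd ℂ a) := by
  funext k
  by_cases h : k = i <;> simp [h, Pi.single_apply]

lemma aux_psd_diag {n : Type*} [Fintype n] [DecidableEq n] {M : Matrix n n ℂ}
    (hM : M.PosSemidef) (i : n) : 0 ≤ (M i i).re ∧ (M i i).im = 0 := by
  have h := hM.dotProduct_mulVec_nonneg (Pi.single i 1)
  have he : dotProduct (star (Pi.single i 1)) (M *ᵥ (Pi.single i 1)) = M i i := by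
    rw [Matrix.mulVec_single, aux_star_pi_single]
    rw [single_dotProduct]
    simp
  rw [he] at h
  rw [Complex.le_def] at h
  simp at h
  exact ⟨h.1, h.2.symm⟩

lemma aux_psd_minor {n : Type*} [Fintype n] [DecidableEq n] {M : Matrix n n ℂ}
    (hM : M.PosSemidef) (i j : n) :
    ‖M i j‖ ^ 2 ≤ (M i i).re * (M j j).re := by
  obtain ⟨hdi, hdi'⟩ := aux_psd_diag hM i
  obtain ⟨hdj, hdj'⟩ := aux_psd_diag hM j
  by_cases hφ : M i j = 0
  · simp [hφ]
    exact mul_nonneg hdi hdj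
  · set φ := M i j with hφdef
    have habs : (‖φ‖ : ℝ) ≠ 0 := by simpa using hφ
    have hns : (starRingEnd ℂ) φ * φ = ((‖φ‖ : ℝ) : ℂ) * ((‖φ‖ : ℝ) : ℂ) := by
      rw [mul_comm, Complex.mul_conj, Complex.normSq_eq_norm_sq]
      push_cast
      ring
    have key : ∀ r : ℝ, 0 ≤ (M i i).re * (r * r) + (-(2 * ‖φ‖)) * r + (M j j).re := by
      intro r
      set β : ℂ := -((starRingEnd ℂ) φ / (‖φ‖ : ℂ)) with hβ
      have h := hM.dotProduct_mulVec_nonneg (Pi.single i ((r:ℝ):ℂ) + Pi.single j β)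
      have he : dotProduct (star (Pi.single i ((r:ℝ):ℂ) + Pi.single j β))
          (M *ᵥ (Pi.single i ((r:ℝ):ℂ) + Pi.single j β)) =
          ((r:ℝ):ℂ) * ((r:ℝ):ℂ) * M i i + (starRingEnd ℂ β * β) * M j j
            + ((r:ℝ):ℂ) * (φ * β) + starRingEnd ℂ β * (M j i * ((r:ℝ):ℂ)) := by
        rw [Matrix.mulVec_add, Matrix.mulVec_single, Matrix.mulVec_single, star_add,
          aux_star_pi_single, aux_star_pi_single]
        simp only [add_dotProduct, dotProduct_add, single_dotProduct,
          Complex.conj_ofReal, Pi.smul_apply, op_smul_eq_mul, Matrix.col_apply, hφdef]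
        ring
      rw [he] at h
      have hMji : M j i = starRingEnd ℂ φ := by
        rw [hφdef]
        have := hM.1.apply j i
        rw [← this]
        rfl
      have hc1 : φ * β = -(‖φ‖ : ℂ) := by
        rw [hβ]
        field_simp
        rw [mul_comm]
        linear_combination -hns
      have hc2 : (starRingEnd ℂ β) * (M j i * ((r:ℝ):ℂ)) = -(‖φ‖ : ℂ) * r := by
        rw [hMji, hβ]
        simp only [map_neg, map_div₀, Complex.conj_conj, Complex.conj_ofReal]
        field_simp
        linear_combination (-((r:ℝ):ℂ)) * hns
      have hc3 : (starRingEnd ℂ β) * β = 1 := by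
        rw [hβ]
        simp only [map_neg, map_div₀, Complex.conj_conj, Complex.conj_ofReal]
        field_simp
        linear_combination hns
      rw [hc1, hc2, hc3] at h
      rw [Complex.le_def] at h
      have h1 := h.1
      simp only [Complex.add_re, Complex.mul_re, Complex.mul_im, Complex.ofReal_re,
        Complex.ofReal_im, Complex.neg_re, Complex.neg_im, Complex.one_re, Complex.one_im,
        Complex.zero_re, hdi', hdj'] at h1
      nlinarith [h1]
    have := discrim_le_zero key
    rw [discrim] at this
    nlinarith [norm_nonneg φ]

lemma aux_sep_offdiag {m n : Type*} [Fintype m] [Fintype n] [DecidableEq m] [DecidableEq n]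
    {ρ : Matrix (m × n) (m × n) ℂ} (h : MatIsSeparable ρ) (b b' : m) (c c' : n) :
    ‖ρ (b, c) (b', c')‖ ≤
      ((ρ (b, c') (b, c')).re + (ρ (b', c) (b', c)).re) / 2 := by
  obtain ⟨k, p, M, N, hp, hpsum, hM, hN, hρ⟩ := h
  have entry : ∀ (q r : m × n), ρ q r = ∑ i, (p i : ℂ) * (M i q.1 r.1 * N i q.2 r.2) := by
    intro q r
    rw [hρ]
    simp [Matrix.sum_apply, Matrix.kroneckerMap_apply]
  have key : ∀ i : Fin k,
      p i * (‖M i b b'‖ * ‖N i c c'‖) ≤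
      p i * ((M i b b).re * (N i c' c').re + (M i b' b').re * (N i c c).re) / 2 := by
    intro i
    have h1 := aux_psd_minor (hM i).1 b b'
    have h2 := aux_psd_minor (hN i).1 c c'
    have d1 := (aux_psd_diag (hM i).1 b).1
    have d2 := (aux_psd_diag (hM i).1 b').1
    have d3 := (aux_psd_diag (hN i).1 c).1
    have d4 := (aux_psd_diag (hN i).1 c').1
    have habs1 := norm_nonneg (M i b b')
    have habs2 := norm_nonneg (N i c c')
    have hgm : ‖M i b b'‖ * ‖N i c c'‖ ≤
        ((M i b b).re * (N i c' c').re + (M i b' b').re * (N i c c).re) / 2 := by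
      nlinarith [sq_nonneg ((M i b b).re * (N i c' c').re - (M i b' b').re * (N i c c).re),
        sq_nonneg (‖M i b b'‖ * ‖N i c c'‖),
        mul_nonneg d1 d4, mul_nonneg d2 d3,
        mul_le_mul h1 h2 (sq_nonneg _) (mul_nonneg d1 d2)]
    calc p i * (‖M i b b'‖ * ‖N i c c'‖)
        ≤ p i * (((M i b b).re * (N i c' c').re + (M i b' b').re * (N i c c).re) / 2) :=
          mul_le_mul_of_nonneg_left hgm (hp i)
      _ = p i * ((M i b b).re * (N i c' c').re + (M i b' b').re * (N i c c).re) / 2 := by ring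
  have diagre : ∀ (q : m × n), (ρ q q).re = ∑ i, p i * ((M i q.1 q.1).re * (N i q.2 q.2).re) := by
    intro q
    rw [entry q q, Complex.re_sum]
    refine Finset.sum_congr rfl fun i _ => ?_
    have dM := (aux_psd_diag (hM i).1 q.1).2
    have dN := (aux_psd_diag (hN i).1 q.2).2
    simp [Complex.mul_re, Complex.mul_im, dM, dN]
  calc ‖ρ (b, c) (b', c')‖
      = ‖∑ i, (p i : ℂ) * (M i b b' * N i c c')‖ := by rw [entry]
    _ ≤ ∑ i, ‖(p i : ℂ) * (M i b b' * N i c c')‖ :=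
        norm_sum_le _ _
    _ = ∑ i, p i * (‖M i b b'‖ * ‖N i c c'‖) := by
        refine Finset.sum_congr rfl fun i _ => ?_
        rw [norm_mul, norm_mul, Complex.norm_real, Real.norm_eq_abs, abs_of_nonneg (hp i)]
    _ ≤ ∑ i, p i * ((M i b b).re * (N i c' c').re + (M i b' b').re * (N i c c).re) / 2 :=
        Finset.sum_le_sum fun i _ => key i
    _ = ((∑ i, p i * ((M i b b).re * (N i c' c').re)) +
          (∑ i, p i * ((M i b' b').re * (N i c c).re))) / 2 := by
        rw [← Finset.sum_add_distrib, ← Finset.sum_div]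
        congr 1
        exact Finset.sum_congr rfl fun i _ => by ring
    _ = ((ρ (b, c') (b, c')).re + (ρ (b', c) (b', c)).re) / 2 := by
        rw [diagre (b, c'), diagre (b', c)]

lemma aux_sum_rot {α β γ M : Type*} [Fintype α] [Fintype β] [Fintype γ] [AddCommMonoid M]
    (h : α → β → γ → M) :
    ∑ x : α, ∑ c : β, ∑ v : γ, h x c v = ∑ v : γ, ∑ c : β, ∑ x : α, h x c v :=
  calc ∑ x : α, ∑ c : β, ∑ v : γ, h x c v
      = ∑ c : β, ∑ x : α, ∑ v : γ, h x c v := Finset.sum_comm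
    _ = ∑ c : β, ∑ v : γ, ∑ x : α, h x c v := Finset.sum_congr rfl (fun _ _ => Finset.sum_comm)
    _ = ∑ v : γ, ∑ c : β, ∑ x : α, h x c v := Finset.sum_comm

lemma aux_idx1 {R κ : ℕ} (g : (Fin R × Fin κ) × (Fin R × Fin κ) → ℝ) (σ : Fin R → Fin κ) :
    (∑ p : (Fin R × Fin κ) × (Fin R × Fin κ),
        (if p.1.2 ≠ σ p.2.1 ∧ p.2.2 = σ p.2.1 then g p else 0))
      = ∑ v : Fin R, ∑ c : Fin κ, (if c = σ v then 0 else ∑ x : Fin R, g ((x,c),(v, σ v))) := by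
  simp only [Fintype.sum_prod_type, ite_and, Finset.sum_ite_irrel, Finset.sum_ite_eq',
    Finset.mem_univ, if_true, Finset.sum_const_zero]
  rw [aux_sum_rot (fun x c v => if ¬ c = σ v then g ((x,c),(v, σ v)) else 0)]
  refine Finset.sum_congr rfl fun v _ => Finset.sum_congr rfl fun c _ => ?_
  split
  · simp_all
  · simp_all

lemma aux_idx2 {R κ : ℕ} (g : (Fin R × Fin κ) × (Fin R × Fin κ) → ℝ) (σ : Fin R → Fin κ) :
    (∑ p : (Fin R × Fin κ) × (Fin R × Fin κ),
        (if p.1.2 = σ p.2.1 ∧ p.2.2 ≠ σ p.2.1 then g p else 0))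
      = ∑ v : Fin R, ∑ c : Fin κ, (if c = σ v then 0 else ∑ x : Fin R, g ((x, σ v),(v, c))) := by
  simp only [Fintype.sum_prod_type, ite_and, Finset.sum_ite_irrel, Finset.sum_ite_eq',
    Finset.mem_univ, if_true, Finset.sum_const_zero]
  rw [aux_sum_rot (fun x c v => if c = σ v then (∑ d : Fin κ, if ¬ d = σ v then g ((x,c),(v,d)) else 0) else 0)]
  refine Finset.sum_congr rfl fun v _ => ?_
  have h1 : ∀ c : Fin κ, (∑ x : Fin R, if c = σ v then (∑ d : Fin κ, if ¬ d = σ v then g ((x,c),(v,d)) else 0) else 0)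
      = (if c = σ v then (∑ x : Fin R, ∑ d : Fin κ, if ¬ d = σ v then g ((x,c),(v,d)) else 0) else 0) := by
    intro c; split <;> simp
  rw [Finset.sum_congr rfl fun c _ => h1 c, Finset.sum_ite_eq' Finset.univ (σ v)]
  simp only [Finset.mem_univ, if_true]
  rw [Finset.sum_comm]
  refine Finset.sum_congr rfl fun d _ => ?_
  rw [show (∑ x : Fin R, if ¬ d = σ v then g ((x, σ v),(v,d)) else 0)
      = (if ¬ d = σ v then ∑ x : Fin R, g ((x, σ v),(v,d)) else 0) from by split <;> simp]
  split
  · simp_all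
  · simp_all

lemma aux_idx3 {R κ : ℕ} (g : (Fin R × Fin κ) × (Fin R × Fin κ) → ℝ) :
    (∑ p : (Fin R × Fin κ) × (Fin R × Fin κ),
        (if p.1.1 ≠ p.2.1 ∧ p.1.2 = p.2.2 then g p else 0))
      = ∑ v : Fin R, ∑ c : Fin κ, ∑ x : Fin R, (if x = v then 0 else g ((x,c),(v,c))) := by
  simp only [Fintype.sum_prod_type, ite_and, Finset.sum_ite_irrel, Finset.sum_ite_eq',
    Finset.sum_ite_eq, Finset.mem_univ, if_true, Finset.sum_const_zero, ne_eq]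
  rw [aux_sum_rot (fun x c v => if ¬ x = v then g ((x,c),(v,c)) else 0)]
  refine Finset.sum_congr rfl fun v _ => Finset.sum_congr rfl fun c _ => Finset.sum_congr rfl fun x _ => ?_
  split
  · simp_all
  · simp_all

lemma aux_sum_split {α M : Type*} [Fintype α] [DecidableEq α] [AddCommMonoid M]
    (f : α → M) (v : α) :
    ∑ x, f x = f v + ∑ x, (if x = v then 0 else f x) := by
  have h : ∀ x, f x = (if x = v then f x else 0) + (if x = v then 0 else f x) := by
    intro x; split <;> simp
  rw [Finset.sum_congr rfl fun x _ => h x, Finset.sum_add_distrib,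
    Finset.sum_ite_eq' Finset.univ v f]
  simp

set_option maxHeartbeats 2000000 in
/-- if `MatchCheck` succeeds with probability at least `1 − ε` and `ρ_BC` is
separable, then the state is `(κ+1)ε`-close to quasirigid: there is an assignment
`σ : [R] → [κ]` capturing almost all of the matched weight. -/
theorem matchcheck_separable_close_to_quasirigid
    (R κ : ℕ) (hR : 1 ≤ R) (hκ : 2 ≤ κ)
    (a : (Fin R × Fin κ) × (Fin R × Fin κ) → ℂ)
    (hnorm : ∑ p : (Fin R × Fin κ) × (Fin R × Fin κ), ‖a p‖ ^ 2 = 1)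
    (ε : ℝ)
    (hmatch : 1 - ε ≤ ∑ v : Fin R, ∑ c : Fin κ, ‖a ((v, c), (v, c))‖ ^ 2)
    (hsep : MatIsSeparable (rhoBC a)) :
    ∃ σ : Fin R → Fin κ,
      1 - (κ + 1) * ε ≤ ∑ v : Fin R, ‖a ((v, σ v), (v, σ v))‖ ^ 2 := by
  classical
  set g : (Fin R × Fin κ) × (Fin R × Fin κ) → ℝ := fun p => ‖a p‖ ^ 2 with hgdef
  have hg0 : ∀ p, 0 ≤ g p := fun p => sq_nonneg _
  have hnorm' : ∑ p : (Fin R × Fin κ) × (Fin R × Fin κ), g p = 1 := hnorm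
  haveI : Nonempty (Fin κ) := ⟨⟨0, by omega⟩⟩
  -- choice of σ as argmax
  have hσex : ∀ v : Fin R, ∃ c0 : Fin κ, ∀ c : Fin κ, g ((v,c),(v,c)) ≤ g ((v,c0),(v,c0)) := by
    intro v
    obtain ⟨c0, _, hc0⟩ := Finset.exists_max_image Finset.univ (fun c => g ((v,c),(v,c)))
      ⟨Classical.arbitrary _, Finset.mem_univ _⟩
    exact ⟨c0, fun c => hc0 c (Finset.mem_univ c)⟩
  choose σ hσ using hσex
  refine ⟨σ, ?_⟩
  set DD : Fin R → Fin κ → Fin κ → ℝ := fun v c d => ∑ x : Fin R, g ((x,c),(v,d)) with hDDdef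
  set uu : Fin R → Fin κ → ℝ := fun v c =>
    ∑ x : Fin R, (if x = v then 0 else g ((x,c),(v,c))) with huudef
  have huu0 : ∀ v c, 0 ≤ uu v c := by
    intro v c
    refine Finset.sum_nonneg fun x _ => ?_
    split
    · exact le_refl 0
    · exact hg0 _
  set S : ℝ := ∑ v : Fin R, ∑ c : Fin κ, g ((v,c),(v,c)) with hSdef
  have hmatch' : 1 - ε ≤ S := hmatch
  -- matched sum as a sum over all indices
  have hSmeq : S = ∑ p : (Fin R × Fin κ) × (Fin R × Fin κ), (if p.1 = p.2 then g p else 0) := by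
    rw [hSdef, Fintype.sum_prod_type]
    simp [Finset.sum_ite_eq, Fintype.sum_prod_type]
  -- master bound
  have master : ∀ F : ((Fin R × Fin κ) × (Fin R × Fin κ)) → ℝ,
      (∀ p, 0 ≤ F p) → (∀ p, F p ≤ g p) → (∀ p, p.1 = p.2 → F p = 0) →
      (∑ p, F p) ≤ 1 - S := by
    intro F hF0 hFg hFdiag
    have h1 : (∑ p, F p) + S ≤ 1 := by
      rw [hSmeq, ← Finset.sum_add_distrib, ← hnorm']
      refine Finset.sum_le_sum fun p _ => ?_
      by_cases h : p.1 = p.2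
      · simp [h, hFdiag p h]
      · simp only [h, if_false, add_zero]
        exact hFg p
    linarith
  have hε0 : 0 ≤ ε := by
    have := master (fun _ => 0) (fun _ => le_refl 0) (fun p => hg0 p) (fun _ _ => rfl)
    simp at this
    linarith
  have h1S : 1 - S ≤ ε := by linarith
  -- diagonal entries of rhoBC
  have diagre : ∀ (c : Fin κ) (v : Fin R) (d : Fin κ),
      ((rhoBC a) ((c,v),d) ((c,v),d)).re = DD v c d := by
    intro c v d
    show (∑ x : Fin R, a ((x,c),(v,d)) * (starRingEnd ℂ) (a ((x,c),(v,d)))).re = _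
    rw [Complex.re_sum]
    refine Finset.sum_congr rfl fun x _ => ?_
    rw [Complex.mul_conj]
    simp [Complex.normSq_eq_norm_sq, ← Complex.ofReal_pow, hgdef]
  -- the key pointwise inequality
  have step2 : ∀ (v : Fin R) (c : Fin κ), c ≠ σ v →
      g ((v,c),(v,c)) ≤ (DD v c (σ v) + DD v (σ v) c + uu v c + uu v (σ v)) / 2 := by
    intro v c hc
    set c' := σ v with hc'def
    set f : Fin R → ℂ := fun x => a ((x,c),(v,c)) * (starRingEnd ℂ) (a ((x,c'),(v,c'))) with hfdef
    set A := ‖a ((v,c),(v,c))‖ with hA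
    set B := ‖a ((v,c'),(v,c'))‖ with hB
    have hA0 : 0 ≤ A := norm_nonneg _
    have hB0 : 0 ≤ B := norm_nonneg _
    have hmle : A ^ 2 ≤ B ^ 2 := hσ v c
    have hAB : A ≤ B := by nlinarith
    have h4 : g ((v,c),(v,c)) ≤ A * B := by
      have : g ((v,c),(v,c)) = A * A := by rw [hA]; simp [hgdef, sq]
      rw [this]
      exact mul_le_mul_of_nonneg_left hAB hA0
    -- the off-diagonal entry
    have ht : (rhoBC a) ((c,v),c) ((c',v),c') = ∑ x : Fin R, f x := rfl
    have habs_t : ‖(rhoBC a) ((c,v),c) ((c',v),c')‖ ≤ (DD v c c' + DD v c' c) / 2 := by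
      have h := aux_sep_offdiag hsep (c,v) (c',v) c c'
      rw [diagre c v c', diagre c' v c] at h
      exact h
    have hsplitf : ∑ x : Fin R, f x = f v + ∑ x : Fin R, (if x = v then 0 else f x) :=
      aux_sum_split f v
    have hfv : ‖f v‖ = A * B := by
      rw [hfdef]
      simp only
      rw [norm_mul, Complex.norm_conj]
    have h1 : A * B ≤ ‖(rhoBC a) ((c,v),c) ((c',v),c')‖
        + ∑ x : Fin R, (if x = v then 0
            else ‖a ((x,c),(v,c))‖ * ‖a ((x,c'),(v,c'))‖) := by
      have hfv' : f v = (rhoBC a) ((c,v),c) ((c',v),c')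
          - ∑ x : Fin R, (if x = v then 0 else f x) := by
        rw [ht, hsplitf]; ring
      calc A * B = ‖f v‖ := hfv.symm
        _ ≤ ‖(rhoBC a) ((c,v),c) ((c',v),c')‖
            + ‖∑ x : Fin R, (if x = v then 0 else f x)‖ := by
              rw [hfv']
              simpa [sub_eq_add_neg] using
                norm_add_le ((rhoBC a) ((c,v),c) ((c',v),c'))
                  (-(∑ x : Fin R, (if x = v then 0 else f x)))
        _ ≤ ‖(rhoBC a) ((c,v),c) ((c',v),c')‖
            + ∑ x : Fin R, ‖if x = v then 0 else f x‖ := by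
              gcongr
              exact norm_sum_le _ _
        _ = ‖(rhoBC a) ((c,v),c) ((c',v),c')‖
            + ∑ x : Fin R, (if x = v then 0
                else ‖a ((x,c),(v,c))‖ * ‖a ((x,c'),(v,c'))‖) := by
              congr 1
              refine Finset.sum_congr rfl fun x _ => ?_
              split
              · simp
              · rw [hfdef]
                simp only
                rw [norm_mul, Complex.norm_conj]
    have h3 : ∑ x : Fin R, (if x = v then 0
          else ‖a ((x,c),(v,c))‖ * ‖a ((x,c'),(v,c'))‖)
        ≤ (uu v c + uu v c') / 2 := by
      have huusum : uu v c + uu v c' = ∑ x : Fin R,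
          ((if x = v then 0 else g ((x,c),(v,c))) + (if x = v then 0 else g ((x,c'),(v,c')))) := by
        rw [huudef]
        simp only
        rw [Finset.sum_add_distrib]
      rw [huusum]
      rw [Finset.sum_div]
      refine Finset.sum_le_sum fun x _ => ?_
      split
      · simp
      · have ha1 := norm_nonneg (a ((x,c),(v,c)))
        have ha2 := norm_nonneg (a ((x,c'),(v,c')))
        have hsq := sq_nonneg (‖a ((x,c),(v,c))‖ - ‖a ((x,c'),(v,c'))‖)
        have hg1 : g ((x,c),(v,c)) = ‖a ((x,c),(v,c))‖ ^ 2 := rfl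
        have hg2 : g ((x,c'),(v,c')) = ‖a ((x,c'),(v,c'))‖ ^ 2 := rfl
        rw [hg1, hg2]
        nlinarith
    linarith
  -- decomposition of S
  have hSsplit : S = (∑ v : Fin R, g ((v, σ v),(v, σ v)))
      + ∑ v : Fin R, ∑ c : Fin κ, (if c = σ v then 0 else g ((v,c),(v,c))) := by
    rw [hSdef, ← Finset.sum_add_distrib]
    exact Finset.sum_congr rfl fun v _ => aux_sum_split (fun c => g ((v,c),(v,c))) (σ v)
  set Loss : ℝ := ∑ v : Fin R, ∑ c : Fin κ, (if c = σ v then 0 else g ((v,c),(v,c))) with hLossdef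
  -- the four error sums
  have hE1 : ∑ v : Fin R, ∑ c : Fin κ, (if c = σ v then 0 else DD v c (σ v)) ≤ 1 - S := by
    rw [← aux_idx1 g σ]
    refine master _ (fun p => ?_) (fun p => ?_) (fun p hp => ?_)
    · split
      · exact hg0 p
      · exact le_refl 0
    · split
      · exact le_refl _
      · exact hg0 p
    · split
      · rename_i hcond
        exact absurd (hp ▸ hcond.2) hcond.1
      · rfl
  have hE2 : ∑ v : Fin R, ∑ c : Fin κ, (if c = σ v then 0 else DD v (σ v) c) ≤ 1 - S := by
    rw [← aux_idx2 g σ]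
    refine master _ (fun p => ?_) (fun p => ?_) (fun p hp => ?_)
    · split
      · exact hg0 p
      · exact le_refl 0
    · split
      · exact le_refl _
      · exact hg0 p
    · split
      · rename_i hcond
        exact absurd (hp ▸ hcond.1) hcond.2
      · rfl
  have hU : ∑ v : Fin R, ∑ c : Fin κ, uu v c ≤ 1 - S := by
    have := aux_idx3 g
    rw [huudef]
    simp only
    rw [← this]
    refine master _ (fun p => ?_) (fun p => ?_) (fun p hp => ?_)
    · split
      · exact hg0 p
      · exact le_refl 0
    · split
      · exact le_refl _
      · exact hg0 p
    · split
      · rename_i hcond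
        exact absurd (congrArg Prod.fst hp) hcond.1
      · rfl
  have hU1 : ∑ v : Fin R, ∑ c : Fin κ, (if c = σ v then 0 else uu v c) ≤ 1 - S := by
    refine le_trans (Finset.sum_le_sum fun v _ => Finset.sum_le_sum fun c _ => ?_) hU
    split
    · exact huu0 v c
    · exact le_refl _
  have hUσ : ∑ v : Fin R, uu v (σ v) ≤ 1 - S := by
    refine le_trans (Finset.sum_le_sum fun v _ => ?_) hU
    exact Finset.single_le_sum (fun c _ => huu0 v c) (Finset.mem_univ (σ v))
  have hU2 : ∑ v : Fin R, ∑ c : Fin κ, (if c = σ v then 0 else uu v (σ v))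
      ≤ ((κ:ℝ) - 1) * (1 - S) := by
    have hper : ∀ v : Fin R, ∑ c : Fin κ, (if c = σ v then 0 else uu v (σ v))
        = ((κ:ℝ) - 1) * uu v (σ v) := by
      intro v
      have := aux_sum_split (fun _ : Fin κ => uu v (σ v)) (σ v)
      simp only [Finset.sum_const, Finset.card_univ, Fintype.card_fin, nsmul_eq_mul] at this
      linarith [this]
    rw [Finset.sum_congr rfl fun v _ => hper v, ← Finset.mul_sum]
    have hκ1 : (0:ℝ) ≤ (κ:ℝ) - 1 := by
      have : (2:ℝ) ≤ (κ:ℝ) := by exact_mod_cast hκ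
      linarith
    exact mul_le_mul_of_nonneg_left hUσ hκ1
  -- bound on Loss
  have hLoss : Loss ≤ ((1 - S) + (1 - S) + (1 - S) + ((κ:ℝ) - 1) * (1 - S)) / 2 := by
    have hpoint : Loss ≤ (∑ v : Fin R, ∑ c : Fin κ, (if c = σ v then 0 else DD v c (σ v))
        + ∑ v : Fin R, ∑ c : Fin κ, (if c = σ v then 0 else DD v (σ v) c)
        + ∑ v : Fin R, ∑ c : Fin κ, (if c = σ v then 0 else uu v c)
        + ∑ v : Fin R, ∑ c : Fin κ, (if c = σ v then 0 else uu v (σ v))) / 2 := by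
      rw [hLossdef]
      have hcomb : ∀ v : Fin R, ∀ c : Fin κ,
          (if c = σ v then 0 else g ((v,c),(v,c)))
          ≤ ((if c = σ v then 0 else DD v c (σ v)) + (if c = σ v then 0 else DD v (σ v) c)
            + (if c = σ v then 0 else uu v c) + (if c = σ v then 0 else uu v (σ v))) / 2 := by
        intro v c
        by_cases h : c = σ v
        · simp [h]
        · simp only [h, if_false]
          exact step2 v c h
      calc ∑ v : Fin R, ∑ c : Fin κ, (if c = σ v then 0 else g ((v,c),(v,c)))
          ≤ ∑ v : Fin R, ∑ c : Fin κ,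
              (((if c = σ v then 0 else DD v c (σ v)) + (if c = σ v then 0 else DD v (σ v) c)
              + (if c = σ v then 0 else uu v c) + (if c = σ v then 0 else uu v (σ v))) / 2) :=
            Finset.sum_le_sum fun v _ => Finset.sum_le_sum fun c _ => hcomb v c
        _ = _ := by
            have hv : ∀ v : Fin R, ∑ c : Fin κ,
                (((if c = σ v then 0 else DD v c (σ v)) + (if c = σ v then 0 else DD v (σ v) c)
                + (if c = σ v then 0 else uu v c) + (if c = σ v then 0 else uu v (σ v))) / 2)
                = ((∑ c : Fin κ, (if c = σ v then 0 else DD v c (σ v)))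
                  + (∑ c : Fin κ, (if c = σ v then 0 else DD v (σ v) c))
                  + (∑ c : Fin κ, (if c = σ v then 0 else uu v c))
                  + (∑ c : Fin κ, (if c = σ v then 0 else uu v (σ v)))) / 2 := by
              intro v
              rw [← Finset.sum_div, ← Finset.sum_add_distrib, ← Finset.sum_add_distrib,
                ← Finset.sum_add_distrib]
            rw [Finset.sum_congr rfl fun v _ => hv v, ← Finset.sum_div,
              ← Finset.sum_add_distrib, ← Finset.sum_add_distrib, ← Finset.sum_add_distrib]
    linarith [hE1, hE2, hU1, hU2]
  -- final arithmetic
  have hκR : (2:ℝ) ≤ (κ:ℝ) := by exact_mod_cast hκ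
  have hfin : 1 - ((κ:ℝ) + 1) * ε ≤ ∑ v : Fin R, g ((v, σ v),(v, σ v)) := by
    have hLoss2 : Loss ≤ (κ:ℝ) * ε := by
      have h2 : ((1 - S) + (1 - S) + (1 - S) + ((κ:ℝ) - 1) * (1 - S)) / 2
          = ((κ:ℝ) + 2) * (1 - S) / 2 := by ring
      rw [h2] at hLoss
      have hm1 : ((κ:ℝ) + 2) * (1 - S) ≤ ((κ:ℝ) + 2) * ε :=
        mul_le_mul_of_nonneg_left h1S (by linarith)
      have hm2 : (0:ℝ) ≤ ((κ:ℝ) - 2) * ε := mul_nonneg (by linarith) hε0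
      linarith
    have := hSsplit
    linarith
  exact hfin
end

section
/- Fix integers R ≥ 1 and κ ≥ 2, and let a be the amplitude function of a unit vector ψ in ℂ^R ⊗ (ℂ^κ ⊗ ℂ^R) ⊗ ℂ^κ as in the tripartite setup, with ρ_{BC} separable. Let w_D = |(1/√(Rκ))·Σ_{v,c} a_{vc,vc}|² be the Density success probability and w_M = Σ_{v,c} |a_{vc,vc}|² the MatchCheck success probability of ψ. If w_D ≥ 1/κ, then (w_D − 1/κ)² + (κ + 1)·w_M ≤ κ + 1. -/
open scoped BigOperators ComplexOrder Kronecker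
open Matrix

lemma sum3_rot {α β γ : Type*} [Fintype α] [Fintype β] [Fintype γ]
    (f : α → β → γ → ℂ) :
    ∑ a, ∑ b, ∑ c, f a b c = ∑ c, ∑ a, ∑ b, f a b c :=
  (Finset.sum_congr rfl fun _ _ => Finset.sum_comm).trans Finset.sum_comm

lemma sum3_rotR {α β γ : Type*} [Fintype α] [Fintype β] [Fintype γ]
    (f : α → β → γ → ℝ) :
    ∑ a, ∑ b, ∑ c, f a b c = ∑ c, ∑ a, ∑ b, f a b c :=
  (Finset.sum_congr rfl fun _ _ => Finset.sum_comm).trans Finset.sum_comm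

lemma sum4_comm {α β γ δ : Type*} [Fintype α] [Fintype β] [Fintype γ] [Fintype δ]
    (f : α → β → γ → δ → ℂ) :
    ∑ c, ∑ d, ∑ k, ∑ l, f c d k l = ∑ k, ∑ l, ∑ c, ∑ d, f c d k l := by
  have h : ∀ c : α, ∑ d : β, ∑ k : γ, ∑ l : δ, f c d k l
      = ∑ k, ∑ l, ∑ d, f c d k l := by
    intro c
    rw [sum3_rot (fun d k l => f c d k l), sum3_rot (fun l d k => f c d k l)]
  simp_rw [h]
  exact Finset.sum_comm.trans (Finset.sum_congr rfl fun k _ => Finset.sum_comm)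

lemma frob_of_trace_one {n m : Type*} [Fintype n] [Fintype m] [DecidableEq n]
    (C : Matrix m n ℂ) (h : (Cᴴ * C).trace = 1) :
    ∑ k : m, ∑ p : n, ‖C k p‖ ^ 2 = 1 := by
  have : (Cᴴ * C).trace = ((∑ k : m, ∑ p : n, ‖C k p‖ ^ 2 : ℝ) : ℂ) := by
    simp only [Matrix.trace, Matrix.diag_apply, Matrix.mul_apply, Matrix.conjTranspose_apply]
    push_cast
    rw [Finset.sum_comm]
    refine Finset.sum_congr rfl fun k _ => Finset.sum_congr rfl fun p _ => ?_
    rw [Complex.star_def, Complex.conj_mul']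
  rw [this] at h
  exact_mod_cast h

lemma key_bound (κ R : ℕ) (M : Matrix (Fin κ × Fin R) (Fin κ × Fin R) ℂ)
    (N : Matrix (Fin κ) (Fin κ) ℂ) (hM : M.PosSemidef) (hMt : M.trace = 1)
    (hN : N.PosSemidef) (hNt : N.trace = 1) :
    (∑ v : Fin R, ∑ c : Fin κ, ∑ d : Fin κ, M (c, v) (d, v) * N c d).re ≤ 1 := by
  obtain ⟨C, rfl⟩ : ∃ C : Matrix (Fin κ × Fin R) (Fin κ × Fin R) ℂ, M = Cᴴ * C := by
    open scoped MatrixOrder in exact CStarAlgebra.nonneg_iff_eq_star_mul_self.mp hM.nonneg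
  obtain ⟨D, rfl⟩ : ∃ D : Matrix (Fin κ) (Fin κ) ℂ, N = Dᴴ * D := by
    open scoped MatrixOrder in exact CStarAlgebra.nonneg_iff_eq_star_mul_self.mp hN.nonneg
  have hC := frob_of_trace_one C hMt
  have hD := frob_of_trace_one D hNt
  set G : (Fin κ × Fin R) → Fin κ → Fin R → ℂ :=
    fun k l v => ∑ c, C k (c, v) * D l c with hG
  have hid : ∀ v : Fin R, ∑ c, ∑ d, (Cᴴ * C) (c, v) (d, v) * (Dᴴ * D) c d
      = ∑ k, ∑ l, ((‖G k l v‖ ^ 2 : ℝ) : ℂ) := by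
    intro v
    have e1 : ∀ c d : Fin κ, (Cᴴ * C) (c, v) (d, v) * (Dᴴ * D) c d
        = ∑ k, ∑ l, ((starRingEnd ℂ) (C k (c, v)) * (starRingEnd ℂ) (D l c))
            * (C k (d, v) * D l d) := by
      intro c d
      simp only [Matrix.mul_apply, Matrix.conjTranspose_apply, Finset.sum_mul_sum]
      refine Finset.sum_congr rfl fun k _ => Finset.sum_congr rfl fun l _ => ?_
      simp only [Complex.star_def]
      ring
    simp_rw [e1]
    rw [sum4_comm]
    refine Finset.sum_congr rfl fun k _ => Finset.sum_congr rfl fun l _ => ?_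
    have e2 : (starRingEnd ℂ) (G k l v) * G k l v
        = ∑ c, ∑ d, ((starRingEnd ℂ) (C k (c, v)) * (starRingEnd ℂ) (D l c))
            * (C k (d, v) * D l d) := by
      simp only [hG, map_sum, _root_.map_mul, Finset.sum_mul_sum]
    rw [← e2, Complex.conj_mul']
    norm_cast
  have habs : ∀ (k : Fin κ × Fin R) (l : Fin κ) (v : Fin R),
      ‖G k l v‖ ^ 2
        ≤ (∑ c, ‖C k (c, v)‖ ^ 2) * ∑ c, ‖D l c‖ ^ 2 := by
    intro k l v
    have h1 : ‖G k l v‖ ≤ ∑ c, ‖C k (c, v)‖ * ‖D l c‖ := by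
      refine (norm_sum_le _ _).trans ?_
      exact le_of_eq (Finset.sum_congr rfl fun c _ => norm_mul _ _)
    calc ‖G k l v‖ ^ 2
        ≤ (∑ c, ‖C k (c, v)‖ * ‖D l c‖) ^ 2 := by
          have h0 := norm_nonneg (G k l v)
          nlinarith
      _ ≤ _ := Finset.sum_mul_sq_le_sq_mul_sq _ _ _
  calc (∑ v : Fin R, ∑ c, ∑ d, (Cᴴ * C) (c, v) (d, v) * (Dᴴ * D) c d).re
      = ∑ v, ∑ k, ∑ l, ‖G k l v‖ ^ 2 := by
        simp_rw [hid]
        norm_cast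
    _ ≤ ∑ v, ∑ k, ∑ l, (∑ c, ‖C k (c, v)‖ ^ 2) * ∑ c, ‖D l c‖ ^ 2 :=
        Finset.sum_le_sum fun v _ => Finset.sum_le_sum fun k _ =>
          Finset.sum_le_sum fun l _ => habs k l v
    _ = (∑ v, ∑ k, ∑ c, ‖C k (c, v)‖ ^ 2)
          * ∑ l, ∑ c, ‖D l c‖ ^ 2 := by
        rw [Finset.sum_mul]
        refine Finset.sum_congr rfl fun v _ => ?_
        rw [Finset.sum_mul]
        exact Finset.sum_congr rfl fun k _ => (Finset.mul_sum _ _ _).symm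
    _ ≤ 1 := by
        rw [hD, mul_one,
          sum3_rotR (fun v k c => ‖C k (c, v)‖ ^ 2),
          sum3_rotR (fun c v k => ‖C k (c, v)‖ ^ 2), ← hC]
        refine le_of_eq (Finset.sum_congr rfl fun k _ => ?_)
        rw [Fintype.sum_prod_type]

lemma sum4_rot {α β γ δ : Type*} [Fintype α] [Fintype β] [Fintype γ] [Fintype δ]
    (f : α → β → γ → δ → ℂ) :
    ∑ a, ∑ b, ∑ c, ∑ d, f a b c d = ∑ d, ∑ a, ∑ b, ∑ c, f a b c d := by
  have h : ∀ a : α, ∑ b : β, ∑ c : γ, ∑ d : δ, f a b c d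
      = ∑ d, ∑ b, ∑ c, f a b c d := fun a =>
    (Finset.sum_congr rfl fun _ _ => Finset.sum_comm).trans Finset.sum_comm
  simp_rw [h]
  exact Finset.sum_comm

lemma sum3_rot' {α β γ : Type*} [Fintype α] [Fintype β] [Fintype γ]
    (f : α → β → γ → ℂ) :
    ∑ a, ∑ b, ∑ c, f a b c = ∑ c, ∑ a, ∑ b, f a b c :=
  (Finset.sum_congr rfl fun _ _ => Finset.sum_comm).trans Finset.sum_comm



/-- the tradeoff between the success probabilities of the `Density` test
(`w_D`) and the `MatchCheck` test (`w_M`): if `w_D ≥ 1/κ` then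
`(w_D − 1/κ)² + (κ+1)·w_M ≤ κ+1`. -/
theorem density_matchcheck_tradeoff
    (R κ : ℕ) (hR : 1 ≤ R) (hκ : 2 ≤ κ)
    (a : (Fin R × Fin κ) × (Fin R × Fin κ) → ℂ)
    (hnorm : ∑ p : (Fin R × Fin κ) × (Fin R × Fin κ), ‖a p‖ ^ 2 = 1)
    (hsep : MatIsSeparable (rhoBC a))
    (wD wM : ℝ)
    (hwD : wD = ‖(Real.sqrt (R * κ) : ℂ)⁻¹ *
        ∑ v : Fin R, ∑ c : Fin κ, a ((v, c), (v, c))‖ ^ 2)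
    (hwM : wM = ∑ v : Fin R, ∑ c : Fin κ, ‖a ((v, c), (v, c))‖ ^ 2)
    (hge : 1 / κ ≤ wD) :
    (wD - 1 / κ) ^ 2 + (κ + 1) * wM ≤ κ + 1 := by
  have hRpos : (0:ℝ) < R := by exact_mod_cast Nat.lt_of_lt_of_le Nat.zero_lt_one hR
  have hκpos : (0:ℝ) < κ := by positivity
  have hRκ : (0:ℝ) < (R:ℝ) * κ := by positivity
  set S : ℂ := ∑ v : Fin R, ∑ c : Fin κ, a ((v, c), (v, c)) with hS
  set s : Fin R → ℂ := fun v => ∑ c : Fin κ, a ((v, c), (v, c)) with hs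
  set T : ℝ := ∑ v : Fin R, ∑ x : Fin R,
      ‖∑ c : Fin κ, a ((x, c), (v, c))‖ ^ 2 with hT
  -- Step 0: rewrite wD
  have hwD2 : wD = ‖S‖ ^ 2 / ((R:ℝ) * κ) := by
    rw [hwD, norm_mul, norm_inv, Complex.norm_real, Real.norm_eq_abs,
      abs_of_nonneg (Real.sqrt_nonneg _), mul_pow, inv_pow,
      Real.sq_sqrt (by positivity : (0:ℝ) ≤ (R:ℝ) * κ), inv_mul_eq_div]
  -- Step 1: Cauchy-Schwarz over v
  have step1 : ‖S‖ ^ 2 ≤ (R:ℝ) * ∑ v, ‖s v‖ ^ 2 := by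
    have h1 : ‖S‖ ≤ ∑ v, ‖s v‖ := by
      rw [hS]; exact norm_sum_le _ _
    have h2 : (∑ v, ‖s v‖) ^ 2
        ≤ (∑ _v : Fin R, (1:ℝ) ^ 2) * ∑ v, ‖s v‖ ^ 2 := by
      have := Finset.sum_mul_sq_le_sq_mul_sq Finset.univ (fun _ : Fin R => (1:ℝ))
        (fun v => ‖s v‖)
      simpa using this
    have h3 : (0:ℝ) ≤ ∑ v, ‖s v‖ :=
      Finset.sum_nonneg fun v _ => norm_nonneg _
    have h4 : ‖S‖ ^ 2 ≤ (∑ v, ‖s v‖) ^ 2 := by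
      nlinarith [norm_nonneg S]
    simpa using h4.trans h2
  -- Step 2: diagonal terms
  have step2 : ∑ v, ‖s v‖ ^ 2 ≤ T := by
    rw [hT]
    refine Finset.sum_le_sum fun v _ => ?_
    have := Finset.single_le_sum
      (f := fun x : Fin R => ‖∑ c : Fin κ, a ((x, c), (v, c))‖ ^ 2)
      (fun x _ => by positivity) (Finset.mem_univ v)
    simpa [hs] using this
  -- Step 3: T in terms of rhoBC
  have hTc : (∑ v : Fin R, ∑ c : Fin κ, ∑ d : Fin κ,
      (rhoBC a) ((c, v), c) ((d, v), d)) = ((T : ℝ) : ℂ) := by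
    rw [hT]
    push_cast
    refine Finset.sum_congr rfl fun v _ => ?_
    have hent : ∀ c d : Fin κ, (rhoBC a) ((c, v), c) ((d, v), d)
        = ∑ x : Fin R, a ((x, c), (v, c)) * (starRingEnd ℂ) (a ((x, d), (v, d))) :=
      fun c d => rfl
    simp_rw [hent]
    rw [sum3_rot' (fun c d x => a ((x, c), (v, c)) * (starRingEnd ℂ) (a ((x, d), (v, d))))]
    refine Finset.sum_congr rfl fun x _ => ?_
    rw [← Finset.sum_mul_sum, ← map_sum, Complex.mul_conj']
  -- Step 4: separability bound
  have step3 : T ≤ 1 := by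
    obtain ⟨k, p, M, N, hp, hps, hMp, hNp, hrho⟩ := hsep
    have hre : T = (∑ v : Fin R, ∑ c : Fin κ, ∑ d : Fin κ,
        (rhoBC a) ((c, v), c) ((d, v), d)).re := by rw [hTc]; norm_cast
    rw [hre, hrho]
    simp only [Matrix.sum_apply, Matrix.smul_apply, Matrix.kroneckerMap_apply,
      smul_eq_mul]
    rw [sum4_rot (fun v c d i => (p i : ℂ) * (M i (c, v) (d, v) * N i c d))]
    rw [Complex.re_sum]
    calc ∑ i, (∑ v : Fin R, ∑ c : Fin κ, ∑ d : Fin κ,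
          (p i : ℂ) * (M i (c, v) (d, v) * N i c d)).re
        = ∑ i, p i * (∑ v : Fin R, ∑ c : Fin κ, ∑ d : Fin κ,
            M i (c, v) (d, v) * N i c d).re := by
          refine Finset.sum_congr rfl fun i _ => ?_
          simp_rw [← Finset.mul_sum]
          exact Complex.re_ofReal_mul _ _
      _ ≤ ∑ i, p i * 1 := by
          refine Finset.sum_le_sum fun i _ => ?_
          exact mul_le_mul_of_nonneg_left
            (key_bound κ R (M i) (N i) (hMp i).1 (hMp i).2 (hNp i).1 (hNp i).2) (hp i)
      _ = 1 := by simpa using hps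
  -- Step 5: wM ≤ 1
  have hwM1 : wM ≤ 1 := by
    rw [hwM, ← hnorm]
    have h1 : ∑ v : Fin R, ∑ c : Fin κ, ‖a ((v, c), (v, c))‖ ^ 2
        = ∑ q : Fin R × Fin κ, ‖a (q, q)‖ ^ 2 :=
      (Fintype.sum_prod_type (f := fun q : Fin R × Fin κ => ‖a (q, q)‖ ^ 2)).symm
    rw [h1]
    have h2 : ∑ q : Fin R × Fin κ, ‖a (q, q)‖ ^ 2
        = ∑ pq ∈ Finset.image (fun q : Fin R × Fin κ => (q, q)) Finset.univ,
            ‖a pq‖ ^ 2 := by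
      rw [Finset.sum_image]
      intro x _ y _ h
      exact congrArg Prod.fst h
    rw [h2]
    exact Finset.sum_le_sum_of_subset_of_nonneg (Finset.subset_univ _)
      (fun _ _ _ => by positivity)
  -- Step 6: wD ≤ 1/κ
  have hwDle : wD ≤ 1 / κ := by
    rw [hwD2]
    have : ‖S‖ ^ 2 ≤ (R:ℝ) * 1 := by
      calc ‖S‖ ^ 2 ≤ (R:ℝ) * ∑ v, ‖s v‖ ^ 2 := step1
        _ ≤ (R:ℝ) * T := by nlinarith
        _ ≤ (R:ℝ) * 1 := by nlinarith
    rw [div_le_iff₀ hRκ]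
    calc ‖S‖ ^ 2 ≤ (R:ℝ) * 1 := this
      _ = 1 / κ * ((R:ℝ) * κ) := by field_simp
  have heq : wD = 1 / κ := le_antisymm hwDle hge
  rw [heq, sub_self]
  have : (0:ℝ) ≤ (κ:ℝ) + 1 := by positivity
  nlinarith
end

section
/- Let ρ₁ and ρ₂ be density matrices on ℂ^n, let p₁ be the largest eigenvalue of ρ₁ and q₁ the largest eigenvalue of ρ₂, and suppose p₁·q₁ = 1 − ε with 0 ≤ ε < 1/3. Then Tr[ρ₁ ρ₂] ≤ 1 − ε + ε². Equivalently, the SWAP test on ρ₁ ⊗ ρ₂ accepts with probability (1/2)(1 + Tr[ρ₁ρ₂]) ≤ 1 − ε/2 + ε²/2. -/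
open scoped BigOperators ComplexOrder
open Matrix

private lemma trace_conj_unitary' {n : ℕ} (W : Matrix.unitaryGroup (Fin n) ℂ)
    (M : Matrix (Fin n) (Fin n) ℂ) :
    (star (W : Matrix (Fin n) (Fin n) ℂ) * M * (W : Matrix (Fin n) (Fin n) ℂ)).trace
      = M.trace := by
  rw [Matrix.trace_mul_cycle, (Matrix.mem_unitaryGroup_iff).mp W.2, Matrix.one_mul]

private lemma real_bound (n : ℕ) (p q : Fin n → ℝ) (d : Fin n → Fin n → ℝ)
    (hp0 : ∀ i, 0 ≤ p i) (hq0 : ∀ j, 0 ≤ q j) (hd0 : ∀ i j, 0 ≤ d i j)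
    (hrow : ∀ i, ∑ j, d i j = 1) (hcol : ∀ j, ∑ i, d i j = 1)
    (hsp : ∑ i, p i = 1) (hsq : ∑ j, q j = 1)
    (p₁ q₁ : ℝ) (hpub : ∀ i, p i ≤ p₁) (hqub : ∀ j, q j ≤ q₁)
    (j₀ : Fin n) (hj₀ : q j₀ = q₁)
    (hq₁half : 1/2 < q₁) (hp₁le : p₁ ≤ 1) (hq₁le : q₁ ≤ 1) :
    ∑ i, ∑ j, p i * (q j * d i j) ≤ p₁ * q₁ + (1 - p₁) * (1 - q₁) := by
  set a : Fin n → ℝ := fun j => ∑ i, p i * d i j with ha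
  have h1 : ∑ i, ∑ j, p i * (q j * d i j) = ∑ j, q j * a j := by
    rw [Finset.sum_comm]
    refine Finset.sum_congr rfl fun j _ => ?_
    rw [ha, Finset.mul_sum]
    exact Finset.sum_congr rfl fun i _ => by ring
  have ha0 : ∀ j, 0 ≤ a j := fun j => Finset.sum_nonneg fun i _ => mul_nonneg (hp0 i) (hd0 i j)
  have haub : ∀ j, a j ≤ p₁ := by
    intro j
    calc a j ≤ ∑ i, p₁ * d i j :=
          Finset.sum_le_sum fun i _ => mul_le_mul_of_nonneg_right (hpub i) (hd0 i j)
      _ = p₁ := by rw [← Finset.mul_sum, hcol j, mul_one]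
  have hsa : ∑ j, a j = 1 := by
    rw [ha, Finset.sum_comm]
    calc ∑ i, ∑ j, p i * d i j = ∑ i, p i * ∑ j, d i j :=
          Finset.sum_congr rfl fun i _ => (Finset.mul_sum _ _ _).symm
      _ = ∑ i, p i := by
          refine Finset.sum_congr rfl fun i _ => by rw [hrow i, mul_one]
      _ = 1 := hsp
  have hq_erase : q j₀ + ∑ j ∈ Finset.univ.erase j₀, q j = 1 := by
    rw [Finset.add_sum_erase _ _ (Finset.mem_univ j₀)]; exact hsq
  have ha_erase : a j₀ + ∑ j ∈ Finset.univ.erase j₀, a j = 1 := by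
    rw [Finset.add_sum_erase _ _ (Finset.mem_univ j₀)]; exact hsa
  have hsplit : ∑ j, q j * a j = q₁ * a j₀ + ∑ j ∈ Finset.univ.erase j₀, q j * a j := by
    rw [← hj₀]
    exact (Finset.add_sum_erase _ (fun j => q j * a j) (Finset.mem_univ j₀)).symm
  have hqrest : ∀ j ∈ Finset.univ.erase j₀, q j ≤ 1 - q₁ := by
    intro j hj
    have hne := Finset.ne_of_mem_erase hj
    have hle : q j ≤ ∑ k ∈ Finset.univ.erase j₀, q k :=
      Finset.single_le_sum (f := q) (fun k _ => hq0 k)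
        (Finset.mem_erase.mpr ⟨hne, Finset.mem_univ j⟩)
    linarith [hq_erase, hj₀]
  have hrest : ∑ j ∈ Finset.univ.erase j₀, q j * a j ≤ (1 - q₁) * (1 - a j₀) := by
    calc ∑ j ∈ Finset.univ.erase j₀, q j * a j
        ≤ ∑ j ∈ Finset.univ.erase j₀, (1 - q₁) * a j :=
          Finset.sum_le_sum fun j hj => mul_le_mul_of_nonneg_right (hqrest j hj) (ha0 j)
      _ = (1 - q₁) * ∑ j ∈ Finset.univ.erase j₀, a j := (Finset.mul_sum _ _ _).symm
      _ = (1 - q₁) * (1 - a j₀) := by rw [show ∑ j ∈ Finset.univ.erase j₀, a j = 1 - a j₀ by linarith]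
  have hkey : q₁ * a j₀ + (1 - q₁) * (1 - a j₀) ≤ p₁ * q₁ + (1 - p₁) * (1 - q₁) := by
    nlinarith [haub j₀, ha0 j₀, hq₁half]
  linarith [h1, hsplit, hrest, hkey]

private lemma q_half (p₁ q₁ ε : ℝ) (h : p₁ * q₁ = 1 - ε) (hp : p₁ ≤ 1) (hq0 : 0 ≤ q₁)
    (hε0 : 0 ≤ ε) (hε : ε < 1/3) : 1/2 < q₁ := by nlinarith

private lemma final_arith (T p₁ q₁ ε : ℝ) (hT : T ≤ p₁ * q₁ + (1 - p₁) * (1 - q₁))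
    (hpq : p₁ * q₁ = 1 - ε) (hp₁0 : 0 ≤ p₁) (hq₁0 : 0 ≤ q₁)
    (hε0 : 0 ≤ ε) (hε : ε < 1/3) : T ≤ 1 - ε + ε ^ 2 := by
  have hs0 : (0:ℝ) ≤ 1 - ε := by linarith
  set s : ℝ := Real.sqrt (1 - ε) with hsdef
  have hsnn : 0 ≤ s := Real.sqrt_nonneg _
  have hs2 : s ^ 2 = 1 - ε := Real.sq_sqrt hs0
  have hprod : Real.sqrt p₁ * Real.sqrt q₁ = s := by
    rw [hsdef, ← hpq, ← Real.sqrt_mul hp₁0]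
  have hsum_ge : 2 * s ≤ p₁ + q₁ := by
    nlinarith [sq_nonneg (Real.sqrt p₁ - Real.sqrt q₁), Real.sq_sqrt hp₁0,
      Real.sq_sqrt hq₁0, hprod]
  have h3 : (0:ℝ) ≤ 3 - 2*ε - ε^2 := by nlinarith
  have hc0 : (0:ℝ) ≤ 2 - ε - ε^2 := by nlinarith
  have h2s : 2 - ε - ε^2 ≤ 2 * s := by
    nlinarith [hs2, hsnn, hc0, mul_nonneg (sq_nonneg ε) h3]
  nlinarith [hT, hpq, hsum_ge]

set_option maxHeartbeats 1000000 in
/-- if the largest eigenvalues `p₁, q₁` of density matrices `ρ₁, ρ₂` satisfy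
`p₁·q₁ = 1 − ε` with `0 ≤ ε < 1/3`, then `Tr[ρ₁ρ₂] ≤ 1 − ε + ε²`; equivalently the SWAP
test accepts with probability at most `1 − ε/2 + ε²/2`. -/
theorem swap_test_acceptance_bound
    (n : ℕ)
    (ρ₁ ρ₂ : Matrix (Fin n) (Fin n) ℂ)
    (h₁ : ρ₁.PosSemidef) (htr₁ : ρ₁.trace = 1)
    (h₂ : ρ₂.PosSemidef) (htr₂ : ρ₂.trace = 1)
    (p₁ q₁ : ℝ)
    (hp₁ : IsGreatest (Set.range h₁.isHermitian.eigenvalues) p₁)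
    (hq₁ : IsGreatest (Set.range h₂.isHermitian.eigenvalues) q₁)
    (ε : ℝ) (hε0 : 0 ≤ ε) (hε : ε < 1 / 3)
    (hpq : p₁ * q₁ = 1 - ε) :
    ((ρ₁ * ρ₂).trace).re ≤ 1 - ε + ε ^ 2 ∧
    (1 / 2) * (1 + ((ρ₁ * ρ₂).trace).re) ≤ 1 - ε / 2 + ε ^ 2 / 2 := by
  have hA := h₁.isHermitian
  have hB := h₂.isHermitian
  set U : Matrix (Fin n) (Fin n) ℂ := (hA.eigenvectorUnitary : Matrix (Fin n) (Fin n) ℂ) with hUdef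
  set V : Matrix (Fin n) (Fin n) ℂ := (hB.eigenvectorUnitary : Matrix (Fin n) (Fin n) ℂ) with hVdef
  set p : Fin n → ℝ := hA.eigenvalues with hpdef
  set q : Fin n → ℝ := hB.eigenvalues with hqdef
  have hUU : star U * U = 1 := (Matrix.mem_unitaryGroup_iff').mp hA.eigenvectorUnitary.2
  have hUU' : U * star U = 1 := (Matrix.mem_unitaryGroup_iff).mp hA.eigenvectorUnitary.2
  have hVV' : V * star V = 1 := (Matrix.mem_unitaryGroup_iff).mp hB.eigenvectorUnitary.2
  have hVV : star V * V = 1 := (Matrix.mem_unitaryGroup_iff').mp hB.eigenvectorUnitary.2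
  set C : Matrix (Fin n) (Fin n) ℂ := star U * V with hCdef
  have hCstar : star C = star V * U := by rw [hCdef, Matrix.star_mul, star_star]
  have hCC : C * star C = 1 := by
    rw [hCdef, hCstar, Matrix.mul_assoc, ← Matrix.mul_assoc V, hVV', Matrix.one_mul, hUU]
  have hCC' : star C * C = 1 := by
    rw [hCdef, hCstar, Matrix.mul_assoc, ← Matrix.mul_assoc U, hUU', Matrix.one_mul, hVV]
  set d : Fin n → Fin n → ℝ := fun i j => Complex.normSq (C i j) with hddef
  have hd0 : ∀ i j, 0 ≤ d i j := fun i j => Complex.normSq_nonneg _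
  -- row and column sums of d
  have hrow : ∀ i, ∑ j, d i j = 1 := by
    intro i
    have h : (C * star C) i i = (1 : ℂ) := by rw [hCC]; simp [Matrix.one_apply]
    have h2 : (((∑ j, d i j : ℝ)) : ℂ) = 1 := by
      rw [← h, Matrix.mul_apply]
      push_cast
      refine Finset.sum_congr rfl fun j _ => ?_
      rw [Matrix.star_apply]
      simp only [hddef]
      simpa using (Complex.mul_conj (C i j)).symm
    exact_mod_cast h2
  have hcol : ∀ j, ∑ i, d i j = 1 := by
    intro j
    have h : (star C * C) j j = (1 : ℂ) := by rw [hCC']; simp [Matrix.one_apply]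
    have h2 : (((∑ i, d i j : ℝ)) : ℂ) = 1 := by
      rw [← h, Matrix.mul_apply]
      push_cast
      refine Finset.sum_congr rfl fun i _ => ?_
      rw [Matrix.star_apply, mul_comm]
      simp only [hddef]
      simpa using (Complex.mul_conj (C i j)).symm
    exact_mod_cast h2
  -- spectral theorems
  have hspec1 := hA.spectral_theorem
  rw [Unitary.conjStarAlgAut_apply] at hspec1
  have hspec2 := hB.spectral_theorem
  rw [Unitary.conjStarAlgAut_apply] at hspec2
  set Dp : Matrix (Fin n) (Fin n) ℂ := Matrix.diagonal (RCLike.ofReal ∘ p) with hDp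
  set Dq : Matrix (Fin n) (Fin n) ℂ := Matrix.diagonal (RCLike.ofReal ∘ q) with hDq
  -- eigenvalue sums
  have hsum_p : ∑ i, p i = 1 := by
    have h0 := htr₁
    rw [hspec1, ← hUdef, Matrix.trace_mul_cycle, hUU,
      Matrix.one_mul, hDp, Matrix.trace_diagonal] at h0
    have h2 : (((∑ i, p i : ℝ)) : ℂ) = 1 := by push_cast; rw [← h0]; rfl
    exact_mod_cast h2
  have hsum_q : ∑ j, q j = 1 := by
    have h0 := htr₂
    rw [hspec2, ← hVdef, Matrix.trace_mul_cycle, hVV,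
      Matrix.one_mul, hDq, Matrix.trace_diagonal] at h0
    have h2 : (((∑ j, q j : ℝ)) : ℂ) = 1 := by push_cast; rw [← h0]; rfl
    exact_mod_cast h2
  -- eigenvalue bounds
  have hp0 : ∀ i, 0 ≤ p i := fun i => h₁.eigenvalues_nonneg i
  have hq0 : ∀ j, 0 ≤ q j := fun j => h₂.eigenvalues_nonneg j
  have hpub : ∀ i, p i ≤ p₁ := fun i => hp₁.2 ⟨i, rfl⟩
  have hqub : ∀ j, q j ≤ q₁ := fun j => hq₁.2 ⟨j, rfl⟩
  obtain ⟨i₀, hi₀⟩ := hp₁.1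
  obtain ⟨j₀, hj₀⟩ := hq₁.1
  have hp₁0 : 0 ≤ p₁ := hi₀ ▸ hp0 i₀
  have hq₁0 : 0 ≤ q₁ := hj₀ ▸ hq0 j₀
  have hp₁le : p₁ ≤ 1 := by
    rw [← hi₀, ← hsum_p]
    exact Finset.single_le_sum (fun k _ => hp0 k) (Finset.mem_univ i₀)
  have hq₁le : q₁ ≤ 1 := by
    rw [← hj₀, ← hsum_q]
    exact Finset.single_le_sum (fun k _ => hq0 k) (Finset.mem_univ j₀)
  have hq₁half : 1/2 < q₁ := q_half p₁ q₁ ε hpq hp₁le hq₁0 hε0 hε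
  -- trace formula
  have htrace : (ρ₁ * ρ₂).trace = ((∑ i, ∑ j, p i * (q j * d i j) : ℝ) : ℂ) := by
    have step2 : star U * (ρ₁ * ρ₂) * U = Dp * (C * (Dq * star C)) := by
      rw [hspec1, hspec2, ← hUdef, ← hVdef, hCstar, hCdef]
      simp only [Matrix.mul_assoc]
      rw [← Matrix.mul_assoc (star U) U, hUU, Matrix.one_mul]
    have entry : ∀ i, (Dp * (C * (Dq * star C))) i i
        = ∑ j, ((p i : ℝ) : ℂ) * (((q j : ℝ) : ℂ) * ((d i j : ℝ) : ℂ)) := by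
      intro i
      rw [hDp, Matrix.diagonal_mul, Matrix.mul_apply, Finset.mul_sum]
      refine Finset.sum_congr rfl fun j _ => ?_
      rw [hDq, Matrix.diagonal_mul, Matrix.star_apply]
      have hmc : (C i j) * star (C i j) = ((d i j : ℝ) : ℂ) := by
        rw [hddef]; exact Complex.mul_conj _
      show ((p i : ℝ) : ℂ) * (C i j * (((q j : ℝ) : ℂ) * star (C i j)))
        = ((p i : ℝ) : ℂ) * (((q j : ℝ) : ℂ) * ((d i j : ℝ) : ℂ))
      rw [← hmc]; ring
    calc (ρ₁ * ρ₂).trace = (star U * (ρ₁ * ρ₂) * U).trace :=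
          (trace_conj_unitary' hA.eigenvectorUnitary _).symm
      _ = (Dp * (C * (Dq * star C))).trace := by rw [step2]
      _ = ∑ i, ∑ j, ((p i : ℝ) : ℂ) * (((q j : ℝ) : ℂ) * ((d i j : ℝ) : ℂ)) := by
          rw [Matrix.trace]
          exact Finset.sum_congr rfl fun i _ => entry i
      _ = ((∑ i, ∑ j, p i * (q j * d i j) : ℝ) : ℂ) := by push_cast; rfl
  have hre : ((ρ₁ * ρ₂).trace).re = ∑ i, ∑ j, p i * (q j * d i j) := by
    rw [htrace, Complex.ofReal_re]
  -- apply the real lemma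
  have hbound := real_bound n p q d hp0 hq0 hd0 hrow hcol hsum_p hsum_q p₁ q₁
    hpub hqub j₀ hj₀ hq₁half hp₁le hq₁le
  have hmain : ((ρ₁ * ρ₂).trace).re ≤ 1 - ε + ε ^ 2 := by
    rw [hre]
    exact final_arith _ p₁ q₁ ε hbound hpq hp₁0 hq₁0 hε0 hε
  exact ⟨hmain, by linarith⟩
end

section
/- Let ψ be a unit vector in ℂ^{d_A} ⊗ ℂ^{d_B}. Suppose ψ is 2-extendable with respect to the second factor: there exists a density matrix σ on ℂ^{d_A} ⊗ ℂ^{d_B} ⊗ ℂ^{d_B} that is invariant under the unitary swapping the two ℂ^{d_B} factors and satisfies Tr_{B₂}[σ] = ψψ† (tracing out the third factor). Then ψ is a product vector, ψ = u ⊗ v for unit vectors u ∈ ℂ^{d_A}, v ∈ ℂ^{d_B}. Conversely, every pure product state is 2-extendable. -/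
open scoped BigOperators ComplexOrder
open Matrix

lemma sum_conj_mul_eq_one {ι : Type*} [Fintype ι] (f : ι → ℂ)
    (h : ∑ i, ‖f i‖ ^ 2 = 1) :
    ∑ i, (starRingEnd ℂ) (f i) * f i = 1 := by
  have h1 : ∀ i, (starRingEnd ℂ) (f i) * f i = ((‖f i‖ ^ 2 : ℝ) : ℂ) := by
    intro i
    rw [Complex.sq_norm]
    exact (Complex.normSq_eq_conj_mul_self).symm
  simp_rw [h1]
  rw [← Complex.ofReal_sum, h, Complex.ofReal_one]

/-- a pure bipartite state `ψ` is 2-extendable with respect to the second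
factor if and only if `ψ` is a product vector. -/
theorem pure_two_extendable_iff_product
    (dA dB : ℕ)
    (ψ : Fin dA × Fin dB → ℂ)
    (hψ : ∑ p, ‖ψ p‖ ^ 2 = 1) :
    (∃ σ : Matrix ((Fin dA × Fin dB) × Fin dB) ((Fin dA × Fin dB) × Fin dB) ℂ,
        σ.PosSemidef ∧ σ.trace = 1 ∧
        (∀ (i i' : Fin dA) (j j' k k' : Fin dB),
          σ ((i, j), k) ((i', j'), k') = σ ((i, k), j) ((i', k'), j')) ∧
        (Matrix.of fun p q => ∑ k : Fin dB, σ (p, k) (q, k))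
          = Matrix.vecMulVec ψ (star ψ)) ↔
    (∃ (u : Fin dA → ℂ) (v : Fin dB → ℂ),
        (∑ i, ‖u i‖ ^ 2 = 1) ∧
        (∑ j, ‖v j‖ ^ 2 = 1) ∧
        ψ = fun p => u p.1 * v p.2) := by
  have hψC : ∑ p, (starRingEnd ℂ) (ψ p) * ψ p = 1 := sum_conj_mul_eq_one ψ hψ
  constructor
  · rintro ⟨σ, hPSD, htr, hswap, hpt⟩
    have hpt' : ∀ p q, ∑ k, σ (p, k) (q, k) = ψ p * (starRingEnd ℂ) (ψ q) := by
      intro p q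
      have := congrFun (congrFun hpt p) q
      simpa [Matrix.vecMulVec_apply] using this
    have herm : ∀ x y, σ x y = (starRingEnd ℂ) (σ y x) := by
      intro x y
      exact (hPSD.1.apply x y).symm
    -- the kernel step
    have key : ∀ (p : Fin dA × Fin dB) (k : Fin dB) (q : Fin dA × Fin dB) (l : Fin dB),
        σ (q, l) (p, k) = (starRingEnd ℂ) (ψ p) * ∑ q', ψ q' * σ (q, l) (q', k) := by
      intro p k₀ q₀ l₀
      set a : Fin dA × Fin dB → ℂ :=
        fun q' => (if q' = p then 1 else 0) - (starRingEnd ℂ) (ψ p) * ψ q' with ha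
      set W : Fin dB → ((Fin dA × Fin dB) × Fin dB) → ℂ :=
        fun k x => if x.2 = k then a x.1 else 0 with hW
      have hmv : ∀ (k : Fin dB) (x : (Fin dA × Fin dB) × Fin dB),
          (σ *ᵥ W k) x = ∑ q'', σ x (q'', k) * a q'' := by
        intro k x
        calc (σ *ᵥ W k) x = ∑ y, σ x y * W k y := rfl
          _ = ∑ q'' : Fin dA × Fin dB, ∑ k'', σ x (q'', k'') * W k (q'', k'') :=
              Fintype.sum_prod_type _
          _ = ∑ q'', σ x (q'', k) * a q'' := by
              refine Finset.sum_congr rfl fun q'' _ => ?_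
              simp only [hW, mul_ite, mul_zero, Finset.sum_ite_eq', Finset.mem_univ, if_true]
      have hquad : ∀ k, star (W k) ⬝ᵥ σ *ᵥ W k
          = ∑ q', ∑ q'', (starRingEnd ℂ) (a q') * (σ (q', k) (q'', k) * a q'') := by
        intro k
        calc star (W k) ⬝ᵥ σ *ᵥ W k = ∑ x, star (W k x) * (σ *ᵥ W k) x := rfl
          _ = ∑ q' : Fin dA × Fin dB, ∑ k',
                star (W k (q', k')) * (σ *ᵥ W k) (q', k') := Fintype.sum_prod_type _
          _ = ∑ q', (starRingEnd ℂ) (a q') * (σ *ᵥ W k) (q', k) := by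
              refine Finset.sum_congr rfl fun q' _ => ?_
              simp only [hW, apply_ite (star : ℂ → ℂ), star_zero, ite_mul, zero_mul,
                Finset.sum_ite_eq', Finset.mem_univ, if_true, Complex.star_def]
          _ = ∑ q', ∑ q'', (starRingEnd ℂ) (a q') * (σ (q', k) (q'', k) * a q'') := by
              refine Finset.sum_congr rfl fun q' _ => ?_
              rw [hmv, Finset.mul_sum]
      have h3 : ∑ q', (starRingEnd ℂ) (a q') * ψ q' = 0 := by
        have : ∀ q', (starRingEnd ℂ) (a q')
            = (if q' = p then 1 else 0) - ψ p * (starRingEnd ℂ) (ψ q') := by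
          intro q'
          simp only [ha, map_sub, _root_.map_mul, Complex.conj_conj,
            apply_ite (starRingEnd ℂ), _root_.map_one, map_zero]
        simp_rw [this, sub_mul, Finset.sum_sub_distrib, ite_mul, one_mul, zero_mul,
          Finset.sum_ite_eq', Finset.mem_univ, if_true, mul_assoc, ← Finset.mul_sum, hψC,
          mul_one, sub_self]
      have hsum0 : ∑ k, star (W k) ⬝ᵥ σ *ᵥ W k = 0 := by
        have h1 : ∑ k, star (W k) ⬝ᵥ σ *ᵥ W k
            = ∑ q', ∑ q'', (starRingEnd ℂ) (a q') * ((∑ k, σ (q', k) (q'', k)) * a q'') := by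
          simp_rw [hquad]
          rw [Finset.sum_comm]
          refine Finset.sum_congr rfl fun q' _ => ?_
          rw [Finset.sum_comm]
          refine Finset.sum_congr rfl fun q'' _ => ?_
          rw [Finset.sum_mul, Finset.mul_sum]
        rw [h1]
        have h2 : ∀ q' q'' : Fin dA × Fin dB,
            (starRingEnd ℂ) (a q') * ((∑ k, σ (q', k) (q'', k)) * a q'')
            = ((starRingEnd ℂ) (a q') * ψ q') * ((starRingEnd ℂ) (ψ q'') * a q'') := by
          intro q' q''
          rw [hpt']
          ring
        simp_rw [h2]
        rw [← Finset.sum_mul_sum, h3, zero_mul]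
      have hzero : ∀ k, star (W k) ⬝ᵥ σ *ᵥ W k = 0 := by
        intro k
        have hnn : ∀ k ∈ Finset.univ, (0 : ℂ) ≤ star (W k) ⬝ᵥ σ *ᵥ W k :=
          fun k _ => hPSD.dotProduct_mulVec_nonneg (W k)
        exact (Finset.sum_eq_zero_iff_of_nonneg hnn).mp hsum0 k (Finset.mem_univ k)
      have hker : σ *ᵥ W k₀ = 0 :=
        (hPSD.dotProduct_mulVec_zero_iff (W k₀)).mp (hzero k₀)
      have h4 : ∑ q', σ (q₀, l₀) (q', k₀) * a q' = 0 := by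
        rw [← hmv k₀ (q₀, l₀), hker]
        rfl
      have h5 : ∑ q', σ (q₀, l₀) (q', k₀) * a q'
          = σ (q₀, l₀) (p, k₀)
            - (starRingEnd ℂ) (ψ p) * ∑ q', ψ q' * σ (q₀, l₀) (q', k₀) := by
        simp_rw [ha, mul_sub, Finset.sum_sub_distrib, mul_ite, mul_one, mul_zero,
          Finset.sum_ite_eq', Finset.mem_univ, if_true, Finset.mul_sum]
        congr 1
        exact Finset.sum_congr rfl fun x _ => by ring
      rw [h5] at h4
      linear_combination h4
    -- factorization
    set c : (Fin dA × Fin dB) → Fin dB → Fin dB → ℂ :=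
      fun q l k => ∑ q', ψ q' * σ (q, l) (q', k) with hc
    set E : Fin dB → Fin dB → ℂ :=
      fun l k => ∑ q', ψ q' * (starRingEnd ℂ) (c q' k l) with hE
    have hcE : ∀ q l k, c q l k = ψ q * E l k := by
      intro q l k
      have h1 : ∀ q', σ (q, l) (q', k) = ψ q * (starRingEnd ℂ) (c q' k l) := by
        intro q'
        rw [herm (q, l) (q', k), key q l q' k, _root_.map_mul, Complex.conj_conj]
      simp_rw [hc, h1, hE, Finset.mul_sum]
      refine Finset.sum_congr rfl fun q' _ => ?_
      ring
    have hfact : ∀ q l p k, σ (q, l) (p, k)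
        = (starRingEnd ℂ) (ψ p) * (ψ q * E l k) := by
      intro q l p k
      have hcdef : c q l k = ∑ q', ψ q' * σ (q, l) (q', k) := rfl
      rw [key p k q l, ← hcdef, hcE]
    -- the rank-one condition
    set B : Fin dA → Fin dA → ℂ :=
      fun i i' => ∑ k, ψ (i, k) * (starRingEnd ℂ) (ψ (i', k)) with hB
    have hkey2 : ∀ i i' j j', ψ (i, j) * (starRingEnd ℂ) (ψ (i', j')) = B i i' * E j j' := by
      intro i i' j j'
      have h1 : ψ (i, j) * (starRingEnd ℂ) (ψ (i', j')) = ∑ k, σ ((i, j), k) ((i', j'), k) :=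
        (hpt' (i, j) (i', j')).symm
      rw [h1]
      have h2 : ∀ k, σ ((i, j), k) ((i', j'), k)
          = ψ (i, k) * (starRingEnd ℂ) (ψ (i', k)) * E j j' := by
        intro k
        rw [hswap, hfact]
        ring
      have hBdef : B i i' = ∑ k, ψ (i, k) * (starRingEnd ℂ) (ψ (i', k)) := rfl
      simp_rw [h2]
      rw [← Finset.sum_mul, ← hBdef]
    -- pick a nonzero entry
    have hne : ∃ p₀, ψ p₀ ≠ 0 := by
      by_contra h
      push_neg at h
      have h0 : ∑ p, ‖ψ p‖ ^ 2 = 0 := by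
        apply Finset.sum_eq_zero
        intro p _
        rw [h p]
        simp only [norm_zero]
        norm_num
      rw [h0] at hψ
      exact zero_ne_one hψ
    obtain ⟨⟨i₀, j₀⟩, hp₀⟩ := hne
    have hsp₀ : (starRingEnd ℂ) (ψ (i₀, j₀)) ≠ 0 := by
      simpa using hp₀
    set f : Fin dA → ℂ := fun i => B i i₀ with hf
    set g : Fin dB → ℂ := fun j => E j j₀ / (starRingEnd ℂ) (ψ (i₀, j₀)) with hg
    have hprod : ∀ i j, ψ (i, j) = f i * g j := by
      intro i j
      have := hkey2 i i₀ j j₀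
      simp only [hf, hg]
      rw [← mul_div_assoc, ← this, mul_div_assoc, div_self hsp₀, mul_one]
    -- normalize
    set F := ∑ i, ‖f i‖ ^ 2 with hF
    set G := ∑ j, ‖g j‖ ^ 2 with hG
    have hFG : F * G = 1 := by
      rw [hF, hG, Finset.sum_mul_sum, ← hψ, Fintype.sum_prod_type]
      refine Finset.sum_congr rfl fun i _ => Finset.sum_congr rfl fun j _ => ?_
      rw [hprod i j, norm_mul, mul_pow]
    have hFnn : 0 ≤ F := Finset.sum_nonneg fun i _ => by positivity
    have hFne : F ≠ 0 := by
      intro h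
      rw [h, zero_mul] at hFG
      exact one_ne_zero hFG.symm
    have hFpos : 0 < F := lt_of_le_of_ne hFnn (Ne.symm hFne)
    set s := Real.sqrt F with hs
    have hspos : 0 < s := Real.sqrt_pos.mpr hFpos
    have hs2 : s ^ 2 = F := Real.sq_sqrt hFpos.le
    refine ⟨fun i => f i / (s : ℂ), fun j => (s : ℂ) * g j, ?_, ?_, ?_⟩
    · have h1 : ∀ i, ‖f i / (s : ℂ)‖ ^ 2 = ‖f i‖ ^ 2 / F := by
        intro i
        rw [norm_div, Complex.norm_real, Real.norm_eq_abs, abs_of_pos hspos, div_pow, hs2]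
      rw [Finset.sum_congr rfl fun i _ => h1 i, ← Finset.sum_div, ← hF, div_self hFne]
    · have h1 : ∀ j, ‖(s : ℂ) * g j‖ ^ 2 = F * ‖g j‖ ^ 2 := by
        intro j
        rw [norm_mul, Complex.norm_real, Real.norm_eq_abs, abs_of_pos hspos, mul_pow, hs2]
      rw [Finset.sum_congr rfl fun j _ => h1 j, ← Finset.mul_sum, ← hG, hFG]
    · funext p
      have hsne : (s : ℂ) ≠ 0 := Complex.ofReal_ne_zero.mpr hspos.ne'
      have h2 : f p.1 / (s : ℂ) * ((s : ℂ) * g p.2) = f p.1 * g p.2 := by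
        calc f p.1 / (s : ℂ) * ((s : ℂ) * g p.2)
            = f p.1 * g p.2 * ((s : ℂ) / (s : ℂ)) := by ring
          _ = f p.1 * g p.2 := by rw [div_self hsne, mul_one]
      rw [show p = (p.1, p.2) from rfl, hprod p.1 p.2]
      exact (h2.symm)
  · rintro ⟨u, v, hu, hv, huv⟩
    have hvC : ∑ j, (starRingEnd ℂ) (v j) * v j = 1 := sum_conj_mul_eq_one v hv
    set φ : (Fin dA × Fin dB) × Fin dB → ℂ := fun x => ψ x.1 * v x.2 with hφ
    refine ⟨Matrix.vecMulVec φ (star φ), ?_, ?_, ?_, ?_⟩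
    · have : Matrix.vecMulVec φ (star φ) = Matrix.replicateCol Unit φ * (Matrix.replicateCol Unit φ)ᴴ := by
        rw [Matrix.conjTranspose_replicateCol, Matrix.vecMulVec_eq Unit]
      rw [this]
      exact Matrix.posSemidef_self_mul_conjTranspose _
    · rw [Matrix.trace]
      have h1 : ∀ x, (Matrix.vecMulVec φ (star φ)).diag x = (starRingEnd ℂ) (φ x) * φ x := by
        intro x
        simp [Matrix.diag, Matrix.vecMulVec_apply, mul_comm, Complex.star_def]
      simp_rw [h1]
      refine sum_conj_mul_eq_one φ ?_
      rw [Fintype.sum_prod_type]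
      have h2 : ∀ (p : Fin dA × Fin dB), ∑ k, ‖φ (p, k)‖ ^ 2
          = ‖ψ p‖ ^ 2 * ∑ k, ‖v k‖ ^ 2 := by
        intro p
        rw [Finset.mul_sum]
        refine Finset.sum_congr rfl fun k _ => ?_
        rw [hφ]
        simp [_root_.map_mul, mul_pow]
      simp_rw [h2, hv, mul_one, hψ]
    · intro i i' j j' k k'
      simp only [Matrix.vecMulVec_apply, hφ, huv, Pi.star_apply]
      ring_nf
    · funext p q
      simp only [Matrix.of_apply, Matrix.vecMulVec_apply, Pi.star_apply, hφ,
        Complex.star_def]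
      have : ∀ k : Fin dB, ψ p * v k * (starRingEnd ℂ) (ψ q * v k)
          = (ψ p * (starRingEnd ℂ) (ψ q)) * ((starRingEnd ℂ) (v k) * v k) := by
        intro k
        rw [_root_.map_mul]
        ring
      simp_rw [this, ← Finset.mul_sum, hvC, mul_one]
end

section
/- Let ρ be a real symmetric positive semidefinite n×n matrix with trace 1 and with all diagonal entries equal to 1/n. Let λ₁ be the largest eigenvalue of ρ and let a ∈ ℝ^n be a corresponding unit eigenvector. Then λ₁·a_i² ≤ 1/n for every i ∈ [n], and consequently Σ_{i=1}^n |1/n − λ₁·a_i²| = 1 − λ₁. -/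
open scoped BigOperators
open Matrix

/-- for a real symmetric PSD matrix `ρ` with trace `1` and constant diagonal
`1/n`, if `λ₁` is its largest eigenvalue with real unit eigenvector `a`, then
`λ₁·a_i² ≤ 1/n` for every `i`, and `Σ_i |1/n − λ₁·a_i²| = 1 − λ₁`. -/
theorem proper_state_eigenvector_bounds
    (n : ℕ) (hn : 0 < n)
    (ρ : Matrix (Fin n) (Fin n) ℝ)
    (hρ : ρ.PosSemidef) (htr : ρ.trace = 1)
    (hdiag : ∀ i, ρ i i = 1 / n)
    (lam : ℝ)
    (hlam : IsGreatest (Set.range hρ.isHermitian.eigenvalues) lam)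
    (a : Fin n → ℝ)
    (ha : ρ.mulVec a = lam • a)
    (hunit : ∑ i, a i ^ 2 = 1) :
    (∀ i, lam * a i ^ 2 ≤ 1 / n) ∧
    (∑ i, |1 / (n : ℝ) - lam * a i ^ 2| = 1 - lam) := by
  have hEig : ∀ j, ∑ k, ρ j k * a k = lam * a j := by
    intro j
    have := congrFun ha j
    simpa [Matrix.mulVec, dotProduct] using this
  have hsym : ∀ p q, ρ p q = ρ q p := by
    intro p q
    have := congrFun (congrFun hρ.isHermitian p) q
    simpa [Matrix.conjTranspose_apply] using this.symm
  have hkey : ∀ i, 0 ≤ 1 / (n : ℝ) - lam * a i ^ 2 := by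
    intro i
    set w : Fin n → ℝ := fun j => (if j = i then (1:ℝ) else 0) - a i * a j with hw
    have h0 : 0 ≤ w ⬝ᵥ ρ.mulVec w := by
      have := hρ.dotProduct_mulVec_nonneg w
      simpa using this
    have hinner : ∀ j, (ρ.mulVec w) j = ρ j i - a i * (lam * a j) := by
      intro j
      have : (ρ.mulVec w) j = ∑ k, (ρ j k * (if k = i then (1:ℝ) else 0) - a i * (ρ j k * a k)) := by
        simp only [Matrix.mulVec, dotProduct, hw]
        exact Finset.sum_congr rfl fun k _ => by ring
      rw [this, Finset.sum_sub_distrib, ← Finset.mul_sum, hEig j]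
      simp
    have hcalc : w ⬝ᵥ ρ.mulVec w = 1 / (n : ℝ) - lam * a i ^ 2 := by
      have : w ⬝ᵥ ρ.mulVec w = ∑ j, ((if j = i then (1:ℝ) else 0) * (ρ j i - a i * (lam * a j))
          - a i * (a j * ρ j i) + a i * (lam * (a i * a j ^ 2))) := by
        simp only [dotProduct, hinner]
        simp only [hw]
        apply Finset.sum_congr rfl
        intro j _
        ring
      rw [this]
      have h1 : ∑ j, a j * ρ j i = lam * a i := by
        rw [← hEig i]
        exact Finset.sum_congr rfl fun j _ => by rw [hsym j i]; ring
      have hA : ∑ j, (if j = i then (1:ℝ) else 0) * (ρ j i - a i * (lam * a j))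
          = ρ i i - a i * (lam * a i) := by
        simp
      have hB : ∑ j, a i * (a j * ρ j i) = a i * (lam * a i) := by
        rw [← Finset.mul_sum, h1]
      have hC : ∑ j, a i * (lam * (a i * a j ^ 2)) = a i * (lam * a i) := by
        calc ∑ j, a i * (lam * (a i * a j ^ 2))
            = ∑ j, (a i * (lam * a i)) * a j ^ 2 :=
              Finset.sum_congr rfl fun j _ => by ring
          _ = (a i * (lam * a i)) * ∑ j, a j ^ 2 := by rw [Finset.mul_sum]
          _ = a i * (lam * a i) := by rw [hunit, mul_one]
      rw [Finset.sum_add_distrib, Finset.sum_sub_distrib, hA, hB, hC, hdiag i]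
      ring
    linarith [h0, hcalc.symm.le, hcalc.le]
  constructor
  · intro i; linarith [hkey i]
  · have : ∀ i, |1 / (n : ℝ) - lam * a i ^ 2| = 1 / (n : ℝ) - lam * a i ^ 2 :=
      fun i => abs_of_nonneg (hkey i)
    simp only [this]
    rw [Finset.sum_sub_distrib, ← Finset.mul_sum, hunit, Finset.sum_const, Finset.card_fin]
    rw [nsmul_eq_mul, mul_one_div_cancel (Nat.cast_ne_zero.mpr hn.ne'), mul_one]
end
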